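/- Let ℱ=(V,ℰ∪𝒜) be a mixed hypergraph, f,g : V → ℤ≥0 functions with min{k,g(v)} ≥ f(v) for every v ∈ V, and k,ℓ,ℓ' positive integers; write g_k(v) = min{k, g(v)} and let M_ℱ^k be the extended k-hypergraphic matroid of ℱ on ground set 𝒜∪𝒜_ℰ with rank function r. Then the following are equivalent: (i) for every 𝒵 ⊆ 𝒜∪𝒜_ℰ, both Σ_{v∈V} max{0, k − g_k(v) − d_𝒵^-(v)} ≤ r((𝒜∪𝒜_ℰ)−𝒵) and k|V| − ℓ' − Σ_{v∈V} min{ d_𝒵^-(v), k − f(v) } ≤ r((𝒜∪𝒜_ℰ)−𝒵); (ii) e_{ℰ∪𝒜}(𝒫) ≥ k|𝒫| − min{ ℓ' − f(V−∪𝒫), g_k(∪𝒫) } for every subpartition 𝒫 of V. -/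

import Mathlib

set_option maxHeartbeats 1000000


/- Common definitions for formalizing packing-of-arborescences theorems.

Conventions:
* A digraph on a finite vertex type `V` is given by a finite multiset of arcs
  `A : Multiset (V × V)`, an arc `(u, v)` having tail `u` and head `v`.
* An undirected (multi)graph is given by a multiset of edges `E : Multiset (V × V)`,
  an edge being recorded as an (arbitrarily ordered) pair of its endpoints.
* A multiset `S` of vertices (e.g. of roots) is given by a finite index type `S`
  together with a placement map `π : S → V`; the multiplicity of a vertex `v` is
  the size of the fiber over `v`.
* A dypergraph is given by a multiset `𝒜 : Multiset (Finset V × V)` of dyperedges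
  `(Z, z)` with tail set `Z` and head `z`; a hypergraph by a multiset
  `ℰ : Multiset (Finset V)` of hyperedges. -/

attribute [local instance] Classical.propDecidable

noncomputable section

namespace ArborPaper

variable {V : Type*} [Fintype V] [DecidableEq V]

/-- An arc `a = (u, v)` (tail `u`, head `v`) enters `X` if its head is in `X`
and its tail is outside. -/
def arcEnters (a : V × V) (X : Finset V) : Prop := a.2 ∈ X ∧ a.1 ∉ X

/-- An undirected edge (given by a pair of endpoints) enters `X` if exactly one of
its endpoints is in `X`. -/
def edgeEnters (e : V × V) (X : Finset V) : Prop :=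
  (e.1 ∈ X ∧ e.2 ∉ X) ∨ (e.2 ∈ X ∧ e.1 ∉ X)

/-- The in-degree `d⁻_A(X)` of a vertex set `X`. -/
def inDeg (A : Multiset (V × V)) (X : Finset V) : ℕ :=
  (A.filter fun a => arcEnters a X).card

/-- The in-degree of a single vertex. -/
def inDegV (A : Multiset (V × V)) (v : V) : ℕ :=
  (A.filter fun a => a.2 = v).card

/-- Reachability by a directed path using the arcs of `A`. -/
def Reaches (A : Multiset (V × V)) (u v : V) : Prop :=
  Relation.ReflTransGen (fun x y => (x, y) ∈ A) u v

/-- `P_D^X` : the set of vertices from which some vertex of `X` is reachable. -/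
def PD (A : Multiset (V × V)) (X : Finset V) : Finset V :=
  Finset.univ.filter fun u => ∃ v ∈ X, Reaches A u v

/-- `Q_D^X` : the set of vertices reachable from some vertex of `X`. -/
def QD (A : Multiset (V × V)) (X : Finset V) : Finset V :=
  Finset.univ.filter fun v => ∃ u ∈ X, Reaches A u v

/-- `C` is a strongly connected component of the digraph `(V, A)`. -/
def IsSCCD (A : Multiset (V × V)) (C : Finset V) : Prop :=
  ∃ v : V, C = Finset.univ.filter fun u => Reaches A u v ∧ Reaches A v u

/-- `B` is an `s`-arborescence with vertex set `U` : all arcs lie inside `U`,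
every vertex of `U` other than `s` has in-degree exactly `1`, the root has
in-degree `0`, and every vertex of `U` is reachable from `s`
(equivalently: no circuit and all in-degrees of non-root vertices equal `1`). -/
def IsArborOn (B : Multiset (V × V)) (U : Finset V) (s : V) : Prop :=
  s ∈ U ∧ (∀ a ∈ B, a.1 ∈ U ∧ a.2 ∈ U) ∧
  (∀ v ∈ U, v ≠ s → inDegV B v = 1) ∧ inDegV B s = 0 ∧
  ∀ v ∈ U, Reaches B s v

/-- `B` is a spanning `s`-arborescence (vertex set all of `V`). -/
def IsSpanningArbor (B : Multiset (V × V)) (s : V) : Prop :=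
  IsArborOn B Finset.univ s

/-- One step along a mixed graph: an arc of `A`, or an edge of `E` in either direction. -/
def MStep (E A : Multiset (V × V)) (u v : V) : Prop :=
  (u, v) ∈ A ∨ (u, v) ∈ E ∨ (v, u) ∈ E

/-- Reachability by a mixed path in the mixed graph `(V, E ∪ A)`. -/
def MReaches (E A : Multiset (V × V)) (u v : V) : Prop :=
  Relation.ReflTransGen (MStep E A) u v

/-- `P_F^X` for a mixed graph `F = (V, E ∪ A)`. -/
def PF (E A : Multiset (V × V)) (X : Finset V) : Finset V :=
  Finset.univ.filter fun u => ∃ v ∈ X, MReaches E A u v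

/-- `Q_F^X` for a mixed graph `F = (V, E ∪ A)`. -/
def QF (E A : Multiset (V × V)) (X : Finset V) : Finset V :=
  Finset.univ.filter fun v => ∃ u ∈ X, MReaches E A u v

/-- `C` is a strongly connected component of the mixed graph `(V, E ∪ A)`. -/
def IsSCC (E A : Multiset (V × V)) (C : Finset V) : Prop :=
  ∃ v : V, C = Finset.univ.filter fun u => MReaches E A u v ∧ MReaches E A v u

/-- `e_{E∪A}(𝒫)` : the number of edges of `E` and arcs of `A` entering at least one
member of the family `P`. -/
def eMixed (E A : Multiset (V × V)) (P : Finset (Finset V)) : ℕ :=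
  (E.filter fun e => ∃ X ∈ P, edgeEnters e X).card +
  (A.filter fun a => ∃ X ∈ P, arcEnters a X).card

/-- A subpartition of `V` : a set of pairwise disjoint nonempty subsets. -/
def IsSubpartition (P : Finset (Finset V)) : Prop :=
  (∀ X ∈ P, X.Nonempty) ∧ ∀ X ∈ P, ∀ Y ∈ P, X ≠ Y → Disjoint X Y

/-- `Eo` is an orientation of the multiset `E` of undirected edges: each edge is
kept or swapped. -/
def IsOrientationOf (E Eo : Multiset (V × V)) : Prop :=
  Multiset.Rel (fun e a => a = e ∨ a = Prod.swap e) E Eo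

/-- The rank function of a matroid on a finite ground type `S`. -/
structure RankFn (S : Type*) [Fintype S] [DecidableEq S] where
  r : Finset S → ℕ
  rank_le_card : ∀ X : Finset S, r X ≤ X.card
  mono : ∀ ⦃X Y : Finset S⦄, X ⊆ Y → r X ≤ r Y
  submodular : ∀ X Y : Finset S, r (X ∪ Y) + r (X ∩ Y) ≤ r X + r Y

/-- `B` is a basis of `T` in the matroid with rank function `M` : an independent
subset of `T` of full rank in `T`. -/
def RankFn.IsBasisOf {S : Type*} [Fintype S] [DecidableEq S] (M : RankFn S)
    (B T : Finset S) : Prop :=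
  B ⊆ T ∧ M.r B = B.card ∧ M.r B = M.r T

/-- A dyperedge `a = (Z, z)` enters `X` if its head `z` is in `X` and some tail
vertex lies outside `X`. -/
def dypEnters (a : Finset V × V) (X : Finset V) : Prop :=
  a.2 ∈ X ∧ (a.1 \ X).Nonempty

/-- The in-degree `d⁻_𝒜(X)` in a dypergraph. -/
def dypInDeg (𝒜 : Multiset (Finset V × V)) (X : Finset V) : ℕ :=
  (𝒜.filter fun a => dypEnters a X).card

/-- A hyperedge `e` enters `X` if it meets both `X` and its complement. -/
def hypEnters (e X : Finset V) : Prop := (e ∩ X).Nonempty ∧ (e \ X).Nonempty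

/-- `e_{ℰ∪𝒜}(𝒫)` for a mixed hypergraph: the number of hyperedges of `ℰ` and
dyperedges of `𝒜` entering at least one member of `P`. -/
def eMH (ℰ : Multiset (Finset V)) (𝒜 : Multiset (Finset V × V))
    (P : Finset (Finset V)) : ℕ :=
  (ℰ.filter fun e => ∃ X ∈ P, hypEnters e X).card +
  (𝒜.filter fun a => ∃ X ∈ P, dypEnters a X).card

/-- `B` is obtained from the multiset `𝒵` of dyperedges by trimming each
dyperedge `(Z, z)` to an arc `(y, z)` with `y ∈ Z`. -/
def Trims (𝒵 : Multiset (Finset V × V)) (B : Multiset (V × V)) : Prop :=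
  Multiset.Rel (fun a b => b.2 = a.2 ∧ b.1 ∈ a.1) 𝒵 B

/-- `𝒟` is an orientation of the multiset `ℰ` of hyperedges: each hyperedge `X`
is replaced by a dyperedge `(X − x, x)` for some `x ∈ X`. -/
def Orients (ℰ : Multiset (Finset V)) (𝒟 : Multiset (Finset V × V)) : Prop :=
  Multiset.Rel (fun e a => a.2 ∈ e ∧ a.1 = e.erase a.2) ℰ 𝒟

/- The extended `k`-hypergraphic matroid of a mixed hypergraph.

The hyperedges are indexed by a finite type `E` (with vertex sets `ε e`, of size
at least two), the dyperedges by a finite type `D` (with tail sets `tl d` and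
heads `hd d`).  The ground set of the extended `k`-hypergraphic matroid
`M_ℱ^k` consists of the dyperedges of `𝒜` (the summand `D`) together with, for
each hyperedge `e ∈ ℰ`, the dyperedges `(e − x, x)`, `x ∈ ε e`, of `𝒜_e`
(the pairs `(e, x)` of the summand `E × V` with `x ∈ ε e`). -/

variable {E D : Type*} [Fintype E] [Fintype D] [DecidableEq E] [DecidableEq D]

/-- The ground set `𝒜 ∪ 𝒜_ℰ` of the extended `k`-hypergraphic matroid. -/
def extGround (ε : E → Finset V) : Finset (D ⊕ E × V) :=
  Finset.univ.filter fun x => Sum.elim (fun _ => True) (fun p => p.2 ∈ ε p.1) x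

/-- The head of a ground element, viewed as a dyperedge. -/
def extHead (hd : D → V) : D ⊕ E × V → V := Sum.elim hd fun p => p.2

/-- The underlying hyperedge of a ground element. -/
def extUnder (ε : E → Finset V) (tl : D → Finset V) (hd : D → V) :
    D ⊕ E × V → Finset V :=
  Sum.elim (fun d => insert (hd d) (tl d)) fun p => ε p.1

/-- Independence in the extended `k`-hypergraphic matroid `M_ℱ^k` : a set of
ground elements containing at most one parallel copy `(e − x, x)` of each
hyperedge `e ∈ ℰ`, whose multiset of underlying hyperedges can be coloured with
`k` colours so that each colour class `𝒵'` (and each nonempty subset of it)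
spans more vertices than its size, i.e. is independent in the hypergraphic
matroid of the underlying hypergraph. -/
def ExtIndep (k : ℕ) (ε : E → Finset V) (tl : D → Finset V) (hd : D → V)
    (Z : Finset (D ⊕ E × V)) : Prop :=
  Z ⊆ extGround ε ∧
  (∀ (e : E) (x x' : V), Sum.inr (e, x) ∈ Z → Sum.inr (e, x') ∈ Z → x = x') ∧
  ∃ c : D ⊕ E × V → Fin k,
    ∀ Z' ⊆ Z, Z'.Nonempty → (∃ i : Fin k, ∀ z ∈ Z', c z = i) →
      Z'.card < (Z'.biUnion (extUnder ε tl hd)).card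

/-- The rank function of the extended `k`-hypergraphic matroid `M_ℱ^k`. -/
def extRank (k : ℕ) (ε : E → Finset V) (tl : D → Finset V) (hd : D → V)
    (Z : Finset (D ⊕ E × V)) : ℕ :=
  Z.powerset.sup fun I => if ExtIndep k ε tl hd I then I.card else 0

/-- `d⁻_𝒵(v)` : the number of elements of `𝒵 ⊆ 𝒜 ∪ 𝒜_ℰ` with head `v`. -/
def extHeadCount (hd : D → V) (Z : Finset (D ⊕ E × V)) (v : V) : ℕ :=
  (Z.filter fun x => extHead hd x = v).card



variable {α : Type*} [DecidableEq α]

/-- A matroid given by its independence predicate on `Finset α`. -/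
structure MLite (Indep : Finset α → Prop) : Prop where
  empty : Indep ∅
  hered : ∀ ⦃A B : Finset α⦄, Indep B → A ⊆ B → Indep A
  exch : ∀ ⦃A B : Finset α⦄, Indep A → Indep B → A.card < B.card →
      ∃ z ∈ B, z ∉ A ∧ Indep (insert z A)

/-- Rank function of an independence predicate. -/
def rkOf (Indep : Finset α → Prop) (A : Finset α) : ℕ :=
  (A.powerset.filter Indep).sup Finset.card

namespace MLite

variable {Indep : Finset α → Prop} (M : MLite Indep)

theorem le_rk {A B : Finset α} (hB : Indep B) (hBA : B ⊆ A) :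
    B.card ≤ rkOf Indep A :=
  Finset.le_sup (Finset.mem_filter.2 ⟨Finset.mem_powerset.2 hBA, hB⟩)

include M

theorem exists_basis (A : Finset α) :
    ∃ B, B ⊆ A ∧ Indep B ∧ B.card = rkOf Indep A := by
  have hne : (A.powerset.filter Indep).Nonempty :=
    ⟨∅, Finset.mem_filter.2 ⟨Finset.mem_powerset.2 (Finset.empty_subset A), M.empty⟩⟩
  obtain ⟨B, hB, hBs⟩ := Finset.exists_mem_eq_sup _ hne Finset.card
  rw [Finset.mem_filter, Finset.mem_powerset] at hB
  exact ⟨B, hB.1, hB.2, hBs.symm⟩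

omit M in
theorem rk_mono {A B : Finset α} (h : A ⊆ B) : rkOf Indep A ≤ rkOf Indep B := by
  refine Finset.sup_le fun C hC => ?_
  rw [Finset.mem_filter, Finset.mem_powerset] at hC
  exact le_rk hC.2 (hC.1.trans h)

omit M in
theorem rk_le_card (A : Finset α) : rkOf Indep A ≤ A.card := by
  refine Finset.sup_le fun C hC => ?_
  rw [Finset.mem_filter, Finset.mem_powerset] at hC
  exact Finset.card_le_card hC.1

theorem exists_basis_ext {J A : Finset α} (hJ : Indep J) (hJA : J ⊆ A) :
    ∃ B, J ⊆ B ∧ B ⊆ A ∧ Indep B ∧ B.card = rkOf Indep A := by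
  obtain hlt | hge := lt_or_ge J.card (rkOf Indep A)
  · -- augment J
    have : ∀ n (J : Finset α), Indep J → J ⊆ A → rkOf Indep A - J.card = n →
        ∃ B, J ⊆ B ∧ B ⊆ A ∧ Indep B ∧ B.card = rkOf Indep A := by
      intro n
      induction n with
      | zero =>
        intro J hJ hJA h0
        have := le_rk hJ hJA
        exact ⟨J, Finset.Subset.refl J, hJA, hJ, by omega⟩
      | succ n ih =>
        intro J hJ hJA hn
        obtain ⟨B0, hB0A, hB0i, hB0c⟩ := M.exists_basis A
        have hlt : J.card < B0.card := by
          have := le_rk hJ hJA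
          omega
        obtain ⟨z, hzB, hzJ, hzi⟩ := M.exch hJ hB0i hlt
        have h1 : insert z J ⊆ A := Finset.insert_subset (hB0A hzB) hJA
        have h2 : (insert z J).card = J.card + 1 := Finset.card_insert_of_notMem hzJ
        obtain ⟨B, hB1, hB2, hB3, hB4⟩ := ih (insert z J) hzi h1 (by omega)
        exact ⟨B, (Finset.subset_insert z J).trans hB1, hB2, hB3, hB4⟩
    exact this _ J hJ hJA rfl
  · have := le_rk hJ hJA
    exact ⟨J, Finset.Subset.refl J, hJA, hJ, le_antisymm this hge⟩

theorem rk_insert_le (A : Finset α) (s : α) :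
    rkOf Indep (insert s A) ≤ rkOf Indep A + 1 := by
  obtain ⟨B, hBA, hBi, hBc⟩ := M.exists_basis (insert s A)
  have h1 : B.erase s ⊆ A := by
    intro x hx
    have hx1 := Finset.mem_of_mem_erase hx
    have hx2 := Finset.ne_of_mem_erase hx
    rcases Finset.mem_insert.1 (hBA hx1) with h | h
    · exact absurd h hx2
    · exact h
  have h2 : (B.erase s).card ≤ rkOf Indep A :=
    le_rk (M.hered hBi (Finset.erase_subset _ _)) h1
  have h3 : B.card ≤ (B.erase s).card + 1 := by
    by_cases hs : s ∈ B
    · rw [Finset.card_erase_of_mem hs]; omega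
    · rw [Finset.erase_eq_of_notMem hs]; omega
  omega

theorem submod (A B : Finset α) :
    rkOf Indep (A ∪ B) + rkOf Indep (A ∩ B) ≤ rkOf Indep A + rkOf Indep B := by
  obtain ⟨J, hJsub, hJi, hJc⟩ := M.exists_basis (A ∩ B)
  obtain ⟨C, hJC, hCsub, hCi, hCc⟩ :=
    M.exists_basis_ext hJi (hJsub.trans Finset.inter_subset_union)
  have h1 : (C ∩ A).card ≤ rkOf Indep A :=
    le_rk (M.hered hCi Finset.inter_subset_left) Finset.inter_subset_right
  have h2 : (C ∩ B).card ≤ rkOf Indep B :=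
    le_rk (M.hered hCi Finset.inter_subset_left) Finset.inter_subset_right
  have h3 : (C ∩ A) ∪ (C ∩ B) = C := by
    rw [← Finset.inter_union_distrib_left]
    exact Finset.inter_eq_left.2 hCsub
  have h4 : (C ∩ A) ∩ (C ∩ B) = C ∩ (A ∩ B) := by
    ext x; simp [Finset.mem_inter]; tauto
  have h5 : (C ∩ A).card + (C ∩ B).card = C.card + (C ∩ (A ∩ B)).card := by
    rw [← Finset.card_union_add_card_inter, h3, h4]
  have h6 : J ⊆ C ∩ (A ∩ B) := Finset.subset_inter hJC hJsub
  have h7 : J.card ≤ (C ∩ (A ∩ B)).card := Finset.card_le_card h6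
  omega

theorem rk_insert_le' (A : Finset α) (s : α) :
    rkOf Indep (insert s A) ≤ rkOf Indep A + rkOf Indep {s} := by
  have := M.submod A {s}
  have h1 : A ∪ {s} = insert s A := by rw [Finset.union_comm]; rfl
  rw [h1] at this
  omega

omit M in
theorem indep_singleton_of_rk {s : α} (h : rkOf Indep {s} ≠ 0) : Indep {s} := by
  by_contra hns
  have : rkOf Indep {s} = 0 := by
    refine Nat.le_zero.1 (Finset.sup_le fun C hC => ?_)
    rw [Finset.mem_filter, Finset.mem_powerset, Finset.subset_singleton_iff] at hC
    rcases hC.1 with rfl | rfl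
    · simp
    · exact absurd hC.2 hns
  exact h this

/-- Contraction of a single non-loop element. -/
def conI (Indep : Finset α → Prop) (s : α) (J : Finset α) : Prop :=
  s ∉ J ∧ Indep (insert s J)

theorem conI_mlite (hs : Indep {s}) : MLite (conI Indep s) := by
  constructor
  · exact ⟨Finset.notMem_empty s, by simpa using hs⟩
  · rintro A B ⟨hsB, hBi⟩ hAB
    exact ⟨fun h => hsB (hAB h), M.hered hBi (Finset.insert_subset_insert s hAB)⟩
  · rintro A B ⟨hsA, hAi⟩ ⟨hsB, hBi⟩ hcard
    have hc : (insert s A).card < (insert s B).card := by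
      rw [Finset.card_insert_of_notMem hsA, Finset.card_insert_of_notMem hsB]; omega
    obtain ⟨z, hzB, hzA, hzi⟩ := M.exch hAi hBi hc
    have hzs : z ≠ s := fun h => hzA (h ▸ Finset.mem_insert_self s A)
    have hzB' : z ∈ B := by
      rcases Finset.mem_insert.1 hzB with h | h
      · exact absurd h hzs
      · exact h
    have hzA' : z ∉ A := fun h => hzA (Finset.mem_insert_of_mem h)
    refine ⟨z, hzB', hzA', ?_, ?_⟩
    · simp only [Finset.mem_insert]
      push_neg
      exact ⟨fun h => hzs h.symm, hsA⟩
    · rwa [Finset.insert_comm]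

theorem conRk {s : α} {A : Finset α} (hsA : s ∉ A) (hs : Indep {s}) :
    rkOf (conI Indep s) A + 1 = rkOf Indep (insert s A) := by
  have hle : rkOf (conI Indep s) A + 1 ≤ rkOf Indep (insert s A) := by
    obtain ⟨B, hBA, ⟨hsB, hBi⟩, hBc⟩ := (M.conI_mlite hs).exists_basis A
    have h1 : insert s B ⊆ insert s A := Finset.insert_subset_insert s hBA
    have := le_rk hBi h1
    rw [Finset.card_insert_of_notMem hsB] at this
    omega
  have hge : rkOf Indep (insert s A) ≤ rkOf (conI Indep s) A + 1 := by
    have hsub : ({s} : Finset α) ⊆ insert s A := by simp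
    obtain ⟨B, hsB, hBA, hBi, hBc⟩ := M.exists_basis_ext hs hsub
    have hsmem : s ∈ B := hsB (Finset.mem_singleton_self s)
    have h1 : B.erase s ⊆ A := by
      intro x hx
      have hx1 := Finset.mem_of_mem_erase hx
      have hx2 := Finset.ne_of_mem_erase hx
      rcases Finset.mem_insert.1 (hBA hx1) with h | h
      · exact absurd h hx2
      · exact h
    have h2 : conI Indep s (B.erase s) := by
      refine ⟨Finset.notMem_erase s B, ?_⟩
      rwa [Finset.insert_erase hsmem]
    have := le_rk (Indep := conI Indep s) h2 h1
    rw [Finset.card_erase_of_mem hsmem] at this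
    have hpos : 1 ≤ B.card := Finset.card_pos.2 ⟨s, hsmem⟩
    omega
  omega

end MLite

/-- The matroid intersection theorem (hard direction). -/
theorem mlite_inter {α : Type*} [DecidableEq α] :
    ∀ (n : ℕ) (I₁ I₂ : Finset α → Prop), MLite I₁ → MLite I₂ →
    ∀ (S : Finset α), S.card = n → ∀ (t : ℕ),
    (∀ A ⊆ S, t ≤ rkOf I₁ A + rkOf I₂ (S \ A)) →
    ∃ J, J ⊆ S ∧ I₁ J ∧ I₂ J ∧ t ≤ J.card := by
  intro n
  induction n with
  | zero =>
    intro I₁ I₂ M₁ M₂ S hS t hmin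
    have hSe : S = ∅ := Finset.card_eq_zero.1 hS
    subst hSe
    have := hmin ∅ (Finset.Subset.refl _)
    simp only [Finset.sdiff_empty] at this
    have h1 : rkOf I₁ (∅ : Finset α) = 0 := Nat.le_zero.1 ((MLite.rk_le_card _).trans (by simp))
    have h2 : rkOf I₂ (∅ : Finset α) = 0 := Nat.le_zero.1 ((MLite.rk_le_card _).trans (by simp))
    exact ⟨∅, Finset.Subset.refl _, M₁.empty, M₂.empty, by omega⟩
  | succ n ih =>
    intro I₁ I₂ M₁ M₂ S hS t hmin
    have hSne : S.Nonempty := Finset.card_pos.1 (by omega)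
    obtain ⟨s, hs⟩ := hSne
    set S' := S.erase s with hS'
    have hS'card : S'.card = n := by
      rw [hS', Finset.card_erase_of_mem hs, hS]
      omega
    by_cases hdel : ∀ A ⊆ S', t ≤ rkOf I₁ A + rkOf I₂ (S' \ A)
    · obtain ⟨J, hJS, h1, h2, h3⟩ := ih I₁ I₂ M₁ M₂ S' hS'card t hdel
      exact ⟨J, hJS.trans (Finset.erase_subset s S), h1, h2, h3⟩
    push_neg at hdel
    obtain ⟨A₁, hA₁S, hA₁⟩ := hdel
    have hsA₁ : s ∉ A₁ := fun h => Finset.notMem_erase s S (hA₁S h)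
    have htpos : 1 ≤ t := by omega
    -- s is not a loop of M₁
    have hs1 : I₁ {s} := by
      refine MLite.indep_singleton_of_rk fun h0 => ?_
      have hsub : A₁ ∪ {s} ⊆ S := by
        refine Finset.union_subset (hA₁S.trans (Finset.erase_subset s S)) (by simpa using hs)
      have hmm := hmin _ hsub
      have hr : rkOf I₁ (A₁ ∪ {s}) ≤ rkOf I₁ A₁ := by
        have h1 : A₁ ∪ {s} = insert s A₁ := by rw [Finset.union_comm]; rfl
        have := M₁.rk_insert_le' A₁ s
        rw [h0] at this; rw [h1]; omega
      have hset : S \ (A₁ ∪ {s}) = S' \ A₁ := by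
        rw [hS', Finset.erase_eq]
        ext x; simp only [Finset.mem_sdiff, Finset.mem_union, Finset.mem_singleton]; tauto
      rw [hset] at hmm
      omega
    -- s is not a loop of M₂
    have hs2 : I₂ {s} := by
      refine MLite.indep_singleton_of_rk fun h0 => ?_
      have hmm := hmin A₁ (hA₁S.trans (Finset.erase_subset s S))
      have hset : S \ A₁ = insert s (S' \ A₁) := by
        rw [hS', Finset.erase_eq]
        ext x
        simp only [Finset.mem_sdiff, Finset.mem_insert, Finset.mem_singleton]
        constructor
        · rintro ⟨hx, hnx⟩
          by_cases hxs : x = s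
          · exact Or.inl hxs
          · exact Or.inr ⟨⟨hx, hxs⟩, hnx⟩
        · rintro (rfl | ⟨⟨hx, _⟩, hnx⟩)
          · exact ⟨hs, hsA₁⟩
          · exact ⟨hx, hnx⟩
      have hr : rkOf I₂ (S \ A₁) ≤ rkOf I₂ (S' \ A₁) := by
        rw [hset]
        have := M₂.rk_insert_le' (S' \ A₁) s
        omega
      omega
    -- contraction
    set I₁' := MLite.conI I₁ s with hI₁'
    set I₂' := MLite.conI I₂ s with hI₂'
    have M₁' := M₁.conI_mlite hs1
    have M₂' := M₂.conI_mlite hs2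
    have hcon : ∀ A ⊆ S', t - 1 ≤ rkOf I₁' A + rkOf I₂' (S' \ A) := by
      by_contra hc
      push_neg at hc
      obtain ⟨A₂, hA₂S, hA₂⟩ := hc
      have hsA₂ : s ∉ A₂ := fun h => Finset.notMem_erase s S (hA₂S h)
      have hsD : s ∉ S' \ A₂ := fun h => Finset.notMem_erase s S (Finset.mem_sdiff.1 h).1
      have e₁ := M₁.conRk hsA₂ hs1
      have e₂ := M₂.conRk hsD hs2
      rw [← hI₁'] at e₁; rw [← hI₂'] at e₂
      -- key sets
      have hins : insert s (S' \ A₂) = S \ A₂ := by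
        rw [hS', Finset.erase_eq]
        ext x
        simp only [Finset.mem_sdiff, Finset.mem_insert, Finset.mem_singleton]
        constructor
        · rintro (rfl | ⟨⟨hx, _⟩, hnx⟩)
          · exact ⟨hs, hsA₂⟩
          · exact ⟨hx, hnx⟩
        · rintro ⟨hx, hnx⟩
          by_cases hxs : x = s
          · exact Or.inl hxs
          · exact Or.inr ⟨⟨hx, hxs⟩, hnx⟩
      rw [hins] at e₂
      have key : rkOf I₁ (insert s A₂) + rkOf I₂ (S \ A₂) ≤ t := by omega
      -- uncrossing
      have sub1 : rkOf I₁ (A₁ ∪ insert s A₂) + rkOf I₁ (A₁ ∩ insert s A₂) ≤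
          rkOf I₁ A₁ + rkOf I₁ (insert s A₂) := M₁.submod _ _
      have sub2 : rkOf I₂ ((S' \ A₁) ∪ (S \ A₂)) + rkOf I₂ ((S' \ A₁) ∩ (S \ A₂)) ≤
          rkOf I₂ (S' \ A₁) + rkOf I₂ (S \ A₂) := M₂.submod _ _
      have eq1 : A₁ ∩ insert s A₂ = A₁ ∩ A₂ := by
        ext x
        simp only [Finset.mem_inter, Finset.mem_insert]
        constructor
        · rintro ⟨h1, rfl | h2⟩
          · exact absurd h1 hsA₁
          · exact ⟨h1, h2⟩
        · rintro ⟨h1, h2⟩; exact ⟨h1, Or.inr h2⟩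
      have eq2 : (S' \ A₁) ∪ (S \ A₂) = S \ (A₁ ∩ A₂) := by
        rw [hS', Finset.erase_eq]
        ext x
        simp only [Finset.mem_union, Finset.mem_sdiff, Finset.mem_inter, Finset.mem_singleton]
        constructor
        · rintro (⟨⟨hx, _⟩, h⟩ | ⟨hx, h⟩)
          · exact ⟨hx, fun hh => h hh.1⟩
          · exact ⟨hx, fun hh => h hh.2⟩
        · rintro ⟨hx, h⟩
          by_cases hxs : x = s
          · subst hxs; exact Or.inr ⟨hx, hsA₂⟩
          · by_cases hx1 : x ∈ A₁
            · exact Or.inr ⟨hx, fun h2 => h ⟨hx1, h2⟩⟩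
            · exact Or.inl ⟨⟨hx, hxs⟩, hx1⟩
      have eq3 : (S' \ A₁) ∩ (S \ A₂) = S \ (A₁ ∪ insert s A₂) := by
        rw [hS', Finset.erase_eq]
        ext x
        simp only [Finset.mem_inter, Finset.mem_sdiff, Finset.mem_union, Finset.mem_insert,
          Finset.mem_singleton]
        tauto
      rw [eq1] at sub1
      rw [eq2, eq3] at sub2
      have hm1 := hmin (A₁ ∩ A₂)
        ((Finset.inter_subset_left).trans (hA₁S.trans (Finset.erase_subset s S)))
      have hm2 := hmin (A₁ ∪ insert s A₂) ?_
      · omega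
      · refine Finset.union_subset (hA₁S.trans (Finset.erase_subset s S)) ?_
        refine Finset.insert_subset hs (hA₂S.trans (Finset.erase_subset s S))
    obtain ⟨J', hJ'S, hJ'1, hJ'2, hJ'c⟩ := ih I₁' I₂' M₁' M₂' S' hS'card (t - 1) hcon
    refine ⟨insert s J', ?_, hJ'1.2, hJ'2.2, ?_⟩
    · exact Finset.insert_subset hs (hJ'S.trans (Finset.erase_subset s S))
    · rw [Finset.card_insert_of_notMem hJ'1.1]
      omega


section Hyperforest

variable {C V : Type*} [DecidableEq C] [DecidableEq V] [Fintype V]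

/-- Independence in the hypergraphic matroid: every nonempty subfamily spans
more vertices than its size. -/
def FIndep (h : C → Finset V) (J : Finset C) : Prop :=
  ∀ J' ⊆ J, J'.Nonempty → J'.card < (J'.biUnion h).card

/-- Members of `J` induced inside `X`. -/
def indC (h : C → Finset V) (J : Finset C) (X : Finset V) : Finset C :=
  J.filter (fun c => h c ⊆ X)

/-- `X` is tight for the hyperforest `J`. -/
def TightC (h : C → Finset V) (J : Finset C) (X : Finset V) : Prop :=
  X.Nonempty ∧ (indC h J X).card + 1 = X.card

variable {h : C → Finset V}

theorem FIndep_empty : FIndep h ∅ := by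
  intro J' hsub hne
  rw [Finset.subset_empty] at hsub
  subst hsub
  exact absurd hne (by simp)

theorem FIndep_hered {A B : Finset C} (hB : FIndep h B) (hAB : A ⊆ B) : FIndep h A :=
  fun J' hsub hne => hB J' (hsub.trans hAB) hne

theorem ind_card {J : Finset C} (hJ : FIndep h J) {X : Finset V} (hX : X.Nonempty) :
    (indC h J X).card + 1 ≤ X.card := by
  by_cases hne : (indC h J X).Nonempty
  · have h1 := hJ (indC h J X) (Finset.filter_subset _ _) hne
    have h2 : (indC h J X).biUnion h ⊆ X := by
      intro v hv
      rw [Finset.mem_biUnion] at hv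
      obtain ⟨c, hc, hvc⟩ := hv
      exact (Finset.mem_filter.1 hc).2 hvc
    have := Finset.card_le_card h2
    omega
  · rw [Finset.not_nonempty_iff_eq_empty] at hne
    rw [hne]
    simpa using Finset.card_pos.2 hX

theorem tight_union {J : Finset C} (hJ : FIndep h J) {X Y : Finset V}
    (hX : TightC h J X) (hY : TightC h J Y) (hXY : (X ∩ Y).Nonempty) :
    TightC h J (X ∪ Y) := by
  have hsub : indC h J X ∪ indC h J Y ⊆ indC h J (X ∪ Y) := by
    intro c hc
    simp only [indC, Finset.mem_union, Finset.mem_filter] at hc ⊢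
    rcases hc with ⟨h1, h2⟩ | ⟨h1, h2⟩
    · exact ⟨h1, h2.trans Finset.subset_union_left⟩
    · exact ⟨h1, h2.trans Finset.subset_union_right⟩
  have hint : indC h J X ∩ indC h J Y = indC h J (X ∩ Y) := by
    ext c
    simp only [indC, Finset.mem_inter, Finset.mem_filter, Finset.subset_inter_iff]
    tauto
  have h1 : (indC h J X ∪ indC h J Y).card + (indC h J (X ∩ Y)).card
      = (indC h J X).card + (indC h J Y).card := by
    rw [← hint]
    exact Finset.card_union_add_card_inter _ _
  have h2 := Finset.card_le_card hsub
  have h3 := ind_card hJ (X := X ∪ Y) (hX.1.mono Finset.subset_union_left)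
  have h4 := ind_card hJ (X := X ∩ Y) hXY
  have h5 : (X ∪ Y).card + (X ∩ Y).card = X.card + Y.card :=
    Finset.card_union_add_card_inter _ _
  have h6 := hX.2
  have h7 := hY.2
  exact ⟨hX.1.mono Finset.subset_union_left, by omega⟩

theorem tight_singleton (hcard : ∀ c, 2 ≤ (h c).card) (J : Finset C) (v : V) :
    TightC h J {v} := by
  refine ⟨Finset.singleton_nonempty v, ?_⟩
  have : indC h J {v} = ∅ := by
    rw [Finset.eq_empty_iff_forall_notMem]
    intro c hc
    have h1 := (Finset.mem_filter.1 hc).2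
    have h2 := Finset.card_le_card h1
    have h3 := hcard c
    rw [Finset.card_singleton] at h2
    omega
  rw [this]
  simp

/-- The maximal tight sets of a hyperforest. -/
def maxTights (h : C → Finset V) (J : Finset C) : Finset (Finset V) :=
  Finset.univ.powerset.filter
    (fun X => TightC h J X ∧ ∀ Y, TightC h J Y → X ⊆ Y → X = Y)

theorem exists_maxTight {J : Finset C} (hJ : FIndep h J) {X : Finset V}
    (hX : TightC h J X) : ∃ M ∈ maxTights h J, X ⊆ M := by
  classical
  set F := Finset.univ.powerset.filter (fun Y => TightC h J Y ∧ X ⊆ Y) with hF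
  have hne : F.Nonempty := ⟨X, by
    rw [hF, Finset.mem_filter]
    exact ⟨Finset.mem_powerset.2 (Finset.subset_univ X), hX, Finset.Subset.refl X⟩⟩
  obtain ⟨M, hM, hMmax⟩ := Finset.exists_max_image F Finset.card hne
  rw [hF, Finset.mem_filter] at hM
  refine ⟨M, ?_, hM.2.2⟩
  rw [maxTights, Finset.mem_filter]
  refine ⟨Finset.mem_powerset.2 (Finset.subset_univ M), hM.2.1, ?_⟩
  intro Y hY hMY
  have hYF : Y ∈ F := by
    rw [hF, Finset.mem_filter]
    exact ⟨Finset.mem_powerset.2 (Finset.subset_univ Y), hY, hM.2.2.trans hMY⟩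
  exact Finset.eq_of_subset_of_card_le hMY (hMmax Y hYF)

theorem maxTights_tight {J : Finset C} {P : Finset V} (hP : P ∈ maxTights h J) :
    TightC h J P := ((Finset.mem_filter.1 hP).2).1

theorem maxTights_disjoint {J : Finset C} (hJ : FIndep h J) {P Q : Finset V}
    (hP : P ∈ maxTights h J) (hQ : Q ∈ maxTights h J) (hPQ : P ≠ Q) :
    Disjoint P Q := by
  rw [Finset.disjoint_left]
  intro v hvP hvQ
  rw [maxTights, Finset.mem_filter] at hP hQ
  have hu : TightC h J (P ∪ Q) :=
    tight_union hJ hP.2.1 hQ.2.1 ⟨v, Finset.mem_inter.2 ⟨hvP, hvQ⟩⟩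
  have h1 : P = P ∪ Q := hP.2.2 _ hu Finset.subset_union_left
  have h2 : Q = P ∪ Q := hQ.2.2 _ hu Finset.subset_union_right
  exact hPQ (h1.trans h2.symm)

theorem maxTights_cover (hcard : ∀ c, 2 ≤ (h c).card) {J : Finset C} (hJ : FIndep h J)
    (v : V) : ∃ P ∈ maxTights h J, v ∈ P := by
  obtain ⟨M, hM, hsub⟩ := exists_maxTight hJ (tight_singleton hcard J v)
  exact ⟨M, hM, hsub (Finset.mem_singleton_self v)⟩

theorem tight_of_not_indep_insert (hcard : ∀ c, 2 ≤ (h c).card) {J : Finset C} {z : C}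
    (hJ : FIndep h J) (hni : ¬ FIndep h (insert z J)) :
    ∃ X, TightC h J X ∧ h z ⊆ X := by
  rw [FIndep] at hni
  push_neg at hni
  obtain ⟨J', hJ'sub, hJ'ne, hJ'c⟩ := hni
  have hzJ' : z ∈ J' := by
    by_contra hz
    have : J' ⊆ J := fun c hc => by
      rcases Finset.mem_insert.1 (hJ'sub hc) with rfl | hcJ
      · exact absurd hc hz
      · exact hcJ
    exact absurd (hJ J' this hJ'ne) (by omega)
  set X := J'.biUnion h with hX
  have hzX : h z ⊆ X := Finset.subset_biUnion_of_mem h hzJ'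
  have hXne : X.Nonempty := by
    have : (h z).Nonempty := Finset.card_pos.1 (by have := hcard z; omega)
    exact this.mono hzX
  have hind : J'.erase z ⊆ indC h J X := by
    intro c hc
    have hc1 := Finset.mem_of_mem_erase hc
    have hc2 := Finset.ne_of_mem_erase hc
    rw [indC, Finset.mem_filter]
    constructor
    · rcases Finset.mem_insert.1 (hJ'sub hc1) with hcc | hcJ
      · exact absurd hcc hc2
      · exact hcJ
    · exact Finset.subset_biUnion_of_mem h hc1
  have h1 : J'.card - 1 ≤ (indC h J X).card := by
    have := Finset.card_le_card hind
    rw [Finset.card_erase_of_mem hzJ'] at this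
    exact this
  have h2 := ind_card hJ hXne
  have h3 : 1 ≤ J'.card := Finset.card_pos.2 hJ'ne
  exact ⟨X, ⟨hXne, by omega⟩, hzX⟩

theorem cert_lemma (hcard : ∀ c, 2 ≤ (h c).card) {J T : Finset C} (hJ : FIndep h J)
    (hmax : ∀ z ∈ T, z ∉ J → ∃ X, TightC h J X ∧ h z ⊆ X) :
    (∑ P ∈ maxTights h J, (P.card - 1)) +
      (T.filter (fun c => ∀ P ∈ maxTights h J, ¬ h c ⊆ P)).card ≤ J.card := by
  classical
  set Pp := maxTights h J with hPp
  -- crossing elements of T lie in J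
  have hcrossJ : T.filter (fun c => ∀ P ∈ Pp, ¬ h c ⊆ P) ⊆
      J.filter (fun c => ∀ P ∈ Pp, ¬ h c ⊆ P) := by
    intro c hc
    rw [Finset.mem_filter] at hc ⊢
    refine ⟨?_, hc.2⟩
    by_contra hcJ
    obtain ⟨X, hX, hhX⟩ := hmax c hc.1 hcJ
    obtain ⟨M, hM, hXM⟩ := exists_maxTight hJ hX
    exact hc.2 M hM (hhX.trans hXM)
  have h1 : (T.filter (fun c => ∀ P ∈ Pp, ¬ h c ⊆ P)).card ≤
      (J.filter (fun c => ∀ P ∈ Pp, ¬ h c ⊆ P)).card := Finset.card_le_card hcrossJ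
  -- sum of (|P|-1) equals number of induced elements of J
  have h2 : ∀ P ∈ Pp, (P.card - 1) = (indC h J P).card := by
    intro P hP
    have := (maxTights_tight hP).2
    omega
  have hdisj : ∀ P ∈ Pp, ∀ Q ∈ Pp, P ≠ Q →
      Disjoint (indC h J P) (indC h J Q) := by
    intro P hP Q hQ hPQ
    rw [Finset.disjoint_left]
    intro c hcP hcQ
    have d := maxTights_disjoint hJ hP hQ hPQ
    have hc1 := (Finset.mem_filter.1 hcP).2
    have hc2 := (Finset.mem_filter.1 hcQ).2
    have hsub9 : h c ⊆ P ∩ Q := Finset.subset_inter hc1 hc2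
    rw [Finset.disjoint_iff_inter_eq_empty.1 d, Finset.subset_empty] at hsub9
    have h9 := hcard c
    rw [hsub9] at h9
    simp at h9
  have h3 : ∑ P ∈ Pp, (indC h J P).card = (Pp.biUnion (indC h J)).card :=
    (Finset.card_biUnion hdisj).symm
  have h4 : Pp.biUnion (indC h J) = J.filter (fun c => ¬ ∀ P ∈ Pp, ¬ h c ⊆ P) := by
    ext c
    simp only [Finset.mem_biUnion, Finset.mem_filter, indC]
    push_neg
    constructor
    · rintro ⟨P, hP, hc, hsub⟩
      exact ⟨hc, P, hP, hsub⟩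
    · rintro ⟨hc, P, hP, hsub⟩
      exact ⟨P, hP, hc, hsub⟩
  have h5 : (J.filter (fun c => ¬ ∀ P ∈ Pp, ¬ h c ⊆ P)).card +
      (J.filter (fun c => ∀ P ∈ Pp, ¬ h c ⊆ P)).card = J.card := by
    rw [Finset.filter_not]
    rw [Finset.card_sdiff_of_subset (Finset.filter_subset _ _)]
    have := Finset.card_le_card (Finset.filter_subset
      (fun c => ∀ P ∈ Pp, ¬ h c ⊆ P) J)
    omega
  calc (∑ P ∈ Pp, (P.card - 1)) + (T.filter (fun c => ∀ P ∈ Pp, ¬ h c ⊆ P)).card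
      = (∑ P ∈ Pp, (indC h J P).card) + (T.filter (fun c => ∀ P ∈ Pp, ¬ h c ⊆ P)).card := by
        rw [Finset.sum_congr rfl h2]
    _ ≤ (Pp.biUnion (indC h J)).card + (J.filter (fun c => ∀ P ∈ Pp, ¬ h c ⊆ P)).card := by
        rw [h3]; omega
    _ ≤ J.card := by rw [h4]; omega

/-- The hypergraphic matroid axioms. -/
theorem FIndep_mlite (hcard : ∀ c, 2 ≤ (h c).card) : MLite (FIndep h) := by
  constructor
  · exact FIndep_empty
  · exact fun A B hB hAB => FIndep_hered hB hAB
  · intro F F' hF hF' hlt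
    by_contra hno
    push_neg at hno
    have hmax : ∀ z ∈ F ∪ F', z ∉ F → ∃ X, TightC h F X ∧ h z ⊆ X := by
      intro z hz hzF
      have hzF' : z ∈ F' := by
        rcases Finset.mem_union.1 hz with hh | hh
        · exact absurd hh hzF
        · exact hh
      exact tight_of_not_indep_insert hcard hF (hno z hzF' hzF)
    have hcert := cert_lemma hcard hF hmax
    set Pp := maxTights h F with hPp
    -- bound |F'|
    have hsplit : (F'.filter (fun c => ¬ ∀ P ∈ Pp, ¬ h c ⊆ P)).card +
        (F'.filter (fun c => ∀ P ∈ Pp, ¬ h c ⊆ P)).card = F'.card := by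
      rw [Finset.filter_not]
      rw [Finset.card_sdiff_of_subset (Finset.filter_subset _ _)]
      have := Finset.card_le_card (Finset.filter_subset
        (fun c => ∀ P ∈ Pp, ¬ h c ⊆ P) F')
      omega
    have hd : ∀ P ∈ Pp, ∀ Q ∈ Pp, P ≠ Q → Disjoint (indC h F' P) (indC h F' Q) := by
      intro P hP Q hQ hPQ
      rw [Finset.disjoint_left]
      intro c hcP hcQ
      have d := maxTights_disjoint hF hP hQ hPQ
      have hc1 := (Finset.mem_filter.1 hcP).2
      have hc2 := (Finset.mem_filter.1 hcQ).2
      have hsub : h c ⊆ P ∩ Q := Finset.subset_inter hc1 hc2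
      rw [Finset.disjoint_iff_inter_eq_empty.1 d, Finset.subset_empty] at hsub
      have := hcard c
      rw [hsub] at this
      simp at this
    have he : F'.filter (fun c => ¬ ∀ P ∈ Pp, ¬ h c ⊆ P) = Pp.biUnion (indC h F') := by
      ext c
      simp only [Finset.mem_biUnion, Finset.mem_filter, indC]
      push_neg
      constructor
      · rintro ⟨hc, P, hP, hsub⟩
        exact ⟨P, hP, hc, hsub⟩
      · rintro ⟨P, hP, hc, hsub⟩
        exact ⟨hc, P, hP, hsub⟩
    have hind : (F'.filter (fun c => ¬ ∀ P ∈ Pp, ¬ h c ⊆ P)).card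
        = ∑ P ∈ Pp, (indC h F' P).card := by
      rw [he, Finset.card_biUnion hd]
    have hbound : ∀ P ∈ Pp, (indC h F' P).card ≤ P.card - 1 := by
      intro P hP
      have := ind_card hF' (maxTights_tight hP).1
      omega
    have hsum : ∑ P ∈ Pp, (indC h F' P).card ≤ ∑ P ∈ Pp, (P.card - 1) :=
      Finset.sum_le_sum hbound
    have hcross : (F'.filter (fun c => ∀ P ∈ Pp, ¬ h c ⊆ P)).card ≤
        ((F ∪ F').filter (fun c => ∀ P ∈ Pp, ¬ h c ⊆ P)).card :=
      Finset.card_le_card (Finset.filter_subset_filter _ Finset.subset_union_right)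
    omega

/-- Lorea-type certificate: the rank of `T` in the hypergraphic matroid is
certified by a partition of `V`. -/
theorem lorea_cert (hcard : ∀ c, 2 ≤ (h c).card) (T : Finset C) :
    ∃ P : Finset (Finset V), (∀ X ∈ P, X.Nonempty) ∧
      (∀ X ∈ P, ∀ Y ∈ P, X ≠ Y → Disjoint X Y) ∧ (P.biUnion id = Finset.univ) ∧
      (∑ X ∈ P, (X.card - 1)) +
        (T.filter (fun c => ∀ X ∈ P, ¬ h c ⊆ X)).card ≤ rkOf (FIndep h) T := by
  obtain ⟨J, hJT, hJi, hJc⟩ := (FIndep_mlite hcard).exists_basis T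
  have hmax : ∀ z ∈ T, z ∉ J → ∃ X, TightC h J X ∧ h z ⊆ X := by
    intro z hz hzJ
    refine tight_of_not_indep_insert hcard hJi fun hi => ?_
    have := MLite.le_rk (Indep := FIndep h) hi (Finset.insert_subset hz hJT)
    rw [Finset.card_insert_of_notMem hzJ] at this
    omega
  refine ⟨maxTights h J, ?_, ?_, ?_, ?_⟩
  · exact fun X hX => (maxTights_tight hX).1
  · exact fun X hX Y hY hXY => maxTights_disjoint hJi hX hY hXY
  · rw [Finset.eq_univ_iff_forall]
    intro v
    obtain ⟨P, hP, hvP⟩ := maxTights_cover hcard hJi v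
    rw [Finset.mem_biUnion]
    exact ⟨P, hP, hvP⟩
  · rw [← hJc] at *
    exact cert_lemma hcard hJi hmax

end Hyperforest


section Packing

variable {C V : Type*} [DecidableEq C] [DecidableEq V] [Fintype V] [Fintype C]

theorem pair_inj {β : Type*} (i : β) : Function.Injective (fun v : V => (v, i)) :=
  fun a b hab => congrArg Prod.fst hab

/-- The `k`-fold product hypergraph. -/
def hProd (h : C → Finset V) (k : ℕ) : C × Fin k → Finset (V × Fin k) :=
  fun p => (h p.1).image (fun v => (v, p.2))

theorem hProd_card {h : C → Finset V} {k : ℕ} (hcard : ∀ c, 2 ≤ (h c).card) :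
    ∀ p : C × Fin k, 2 ≤ (hProd h k p).card := by
  intro p
  rw [hProd, Finset.card_image_of_injective _ (pair_inj p.2)]
  exact hcard p.1

theorem FIndep_prod {h : C → Finset V} {k : ℕ} {J : Finset C} (hJ : FIndep h J) :
    FIndep (hProd h k) (J ×ˢ Finset.univ) := by
  intro K hK hKne
  have hslice : K.card = ∑ i : Fin k, (K.filter (fun p => p.2 = i)).card :=
    Finset.card_eq_sum_card_fiberwise (fun p _ => Finset.mem_univ p.2)
  set W := K.biUnion (hProd h k) with hW
  have hWslice : W.card = ∑ i : Fin k, (W.filter (fun q => q.2 = i)).card :=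
    Finset.card_eq_sum_card_fiberwise (fun p _ => Finset.mem_univ p.2)
  set Ji := fun i : Fin k => (K.filter (fun p => p.2 = i)).image Prod.fst with hJi
  have hJiJ : ∀ i, Ji i ⊆ J := by
    intro i c hc
    simp only [hJi] at hc
    obtain ⟨p, hp, rfl⟩ := Finset.mem_image.1 hc
    have := hK (Finset.mem_filter.1 hp).1
    exact (Finset.mem_product.1 this).1
  have hcardJi : ∀ i, (K.filter (fun p => p.2 = i)).card = (Ji i).card := by
    intro i
    simp only [hJi]
    refine (Finset.card_image_of_injOn ?_).symm
    intro p hp q hq hpq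
    have h1 := (Finset.mem_filter.1 hp).2
    have h2 := (Finset.mem_filter.1 hq).2
    exact Prod.ext hpq (h1.trans h2.symm)
  have hWfil : ∀ i : Fin k, W.filter (fun q => q.2 = i) =
      ((Ji i).biUnion h).image (fun v => (v, i)) := by
    intro i
    ext q
    constructor
    · intro hq
      rw [Finset.mem_filter] at hq
      obtain ⟨hqW, hq2⟩ := hq
      rw [hW, Finset.mem_biUnion] at hqW
      obtain ⟨p, hp, hq⟩ := hqW
      rw [hProd, Finset.mem_image] at hq
      obtain ⟨v, hv, hvq⟩ := hq
      have hp2 : p.2 = i := by rw [← hq2, ← hvq]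
      rw [Finset.mem_image]
      refine ⟨v, ?_, by rw [← hvq, hp2]⟩
      rw [Finset.mem_biUnion]
      refine ⟨p.1, ?_, hv⟩
      show p.1 ∈ (K.filter (fun p => p.2 = i)).image Prod.fst
      exact Finset.mem_image.2 ⟨p, Finset.mem_filter.2 ⟨hp, hp2⟩, rfl⟩
    · intro hq
      rw [Finset.mem_image] at hq
      obtain ⟨v, hv, hvq⟩ := hq
      rw [Finset.mem_biUnion] at hv
      obtain ⟨c, hc, hvc⟩ := hv
      have hc' : c ∈ (K.filter (fun p => p.2 = i)).image Prod.fst := hc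
      obtain ⟨p, hp, hpc⟩ := Finset.mem_image.1 hc'
      rw [Finset.mem_filter] at hp
      rw [Finset.mem_filter]
      constructor
      · rw [hW, Finset.mem_biUnion]
        refine ⟨p, hp.1, ?_⟩
        rw [hProd, Finset.mem_image]
        exact ⟨v, by rw [hpc]; exact hvc, by rw [hp.2, hvq]⟩
      · rw [← hvq]
  have hWcard : ∀ i, (W.filter (fun q => q.2 = i)).card = ((Ji i).biUnion h).card := by
    intro i
    rw [hWfil i]
    exact Finset.card_image_of_injective _ (pair_inj i)
  obtain ⟨p0, hp0⟩ := hKne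
  have hne0 : (Ji p0.2).Nonempty := by
    refine ⟨p0.1, ?_⟩
    show p0.1 ∈ (K.filter (fun p => p.2 = p0.2)).image Prod.fst
    exact Finset.mem_image.2 ⟨p0, Finset.mem_filter.2 ⟨hp0, rfl⟩, rfl⟩
  rw [hslice, hWslice]
  refine Finset.sum_lt_sum (fun i _ => ?_) ⟨p0.2, Finset.mem_univ _, ?_⟩
  · rw [hcardJi i, hWcard i]
    by_cases hne : (Ji i).Nonempty
    · exact le_of_lt (hJ _ (hJiJ i) hne)
    · rw [Finset.not_nonempty_iff_eq_empty] at hne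
      rw [hne]
      simp
  · rw [hcardJi _, hWcard _]
    exact hJ _ (hJiJ p0.2) hne0

/-- The partition matroid on `C × Fin k`: at most one copy of each `c`. -/
def PIndep {k : ℕ} (J : Finset (C × Fin k)) : Prop :=
  ∀ a ∈ J, ∀ b ∈ J, a.1 = b.1 → a = b

theorem PIndep_mlite {k : ℕ} : MLite (PIndep (C := C) (k := k)) := by
  constructor
  · intro a ha; simp at ha
  · intro A B hB hAB a ha b hb hab
    exact hB a (hAB ha) b (hAB hb) hab
  · intro A B hA hB hcard
    have hAim : (A.image Prod.fst).card = A.card :=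
      Finset.card_image_of_injOn (fun a ha b hb hab => hA a ha b hb hab)
    have hBim : (B.image Prod.fst).card = B.card :=
      Finset.card_image_of_injOn (fun a ha b hb hab => hB a ha b hb hab)
    have hns : ¬ B.image Prod.fst ⊆ A.image Prod.fst := by
      intro hsub
      have := Finset.card_le_card hsub
      omega
    rw [Finset.not_subset] at hns
    obtain ⟨c, hcB, hcA⟩ := hns
    obtain ⟨z, hzB, rfl⟩ := Finset.mem_image.1 hcB
    have hzA : z ∉ A := fun h => hcA (Finset.mem_image_of_mem _ h)
    refine ⟨z, hzB, hzA, ?_⟩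
    intro a ha b hb hab
    rcases Finset.mem_insert.1 ha with rfl | ha' <;>
      rcases Finset.mem_insert.1 hb with rfl | hb'
    · rfl
    · exfalso
      refine hcA ?_
      rw [hab]
      exact Finset.mem_image_of_mem Prod.fst hb'
    · exfalso
      refine hcA ?_
      rw [← hab]
      exact Finset.mem_image_of_mem Prod.fst ha'
    · exact hA a ha' b hb' hab

theorem PIndep_rk_ge {k : ℕ} (A : Finset (C × Fin k)) :
    (A.image Prod.fst).card ≤ rkOf (PIndep (C := C) (k := k)) A := by
  classical
  have key : ∀ n (A : Finset (C × Fin k)), A.card = n →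
      ∃ B, B ⊆ A ∧ PIndep B ∧ B.image Prod.fst = A.image Prod.fst := by
    intro n
    induction n using Nat.strong_induction_on with
    | _ n ih =>
      intro A hA
      by_cases hP : PIndep A
      · exact ⟨A, Finset.Subset.refl A, hP, rfl⟩
      · rw [PIndep] at hP
        push_neg at hP
        obtain ⟨a, ha, b, hb, hab, hne⟩ := hP
        have hcard : (A.erase a).card < n := by
          rw [Finset.card_erase_of_mem ha]
          have := Finset.card_pos.2 ⟨a, ha⟩
          omega
        obtain ⟨B, hB1, hB2, hB3⟩ := ih (A.erase a).card (by omega) (A.erase a) rfl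
        refine ⟨B, hB1.trans (Finset.erase_subset a A), hB2, ?_⟩
        rw [hB3]
        apply Finset.Subset.antisymm
        · exact Finset.image_subset_image (Finset.erase_subset a A)
        · intro c hc
          obtain ⟨x, hx, rfl⟩ := Finset.mem_image.1 hc
          by_cases hxa : x = a
          · subst hxa
            exact Finset.mem_image.2
              ⟨b, Finset.mem_erase.2 ⟨fun hba => hne hba.symm, hb⟩, hab.symm⟩
          · exact Finset.mem_image.2 ⟨x, Finset.mem_erase.2 ⟨hxa, hx⟩, rfl⟩
  obtain ⟨B, hB1, hB2, hB3⟩ := key A.card A rfl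
  have h1 := MLite.le_rk (Indep := PIndep (C := C) (k := k)) hB2 hB1
  have hBc : B.card = (B.image Prod.fst).card :=
    (Finset.card_image_of_injOn (fun a ha b hb hab => hB2 a ha b hb hab)).symm
  rw [hB3] at hBc
  omega

/-- Packing `k` hyperforests: subset form of the min-max (hard direction). -/
theorem kforest_packing {h : C → Finset V} (hcard : ∀ c, 2 ≤ (h c).card)
    {k : ℕ} (hk : 0 < k) (S : Finset C) (t : ℕ)
    (hmin : ∀ T ⊆ S, t ≤ (S \ T).card + k * rkOf (FIndep h) T) :
    ∃ J, J ⊆ S ∧ t ≤ J.card ∧ ∃ col : C → Fin k,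
      ∀ i, FIndep h (J.filter (fun c => col c = i)) := by
  classical
  set Shat := S ×ˢ (Finset.univ : Finset (Fin k)) with hShat
  have hinter := mlite_inter Shat.card (FIndep (hProd h k)) (PIndep (C := C) (k := k))
    (FIndep_mlite (hProd_card hcard)) (PIndep_mlite) Shat rfl t ?_
  · obtain ⟨Jhat, hJS, hJ1, hJ2, hJc⟩ := hinter
    set J := Jhat.image Prod.fst with hJ
    have hJcard : J.card = Jhat.card :=
      Finset.card_image_of_injOn (fun a ha b hb hab => hJ2 a ha b hb hab)
    have hJsubS : J ⊆ S := by
      intro c hc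
      obtain ⟨p, hp, rfl⟩ := Finset.mem_image.1 hc
      exact (Finset.mem_product.1 (hJS hp)).1
    set col : C → Fin k := fun c =>
      if hc : ∃ i, (c, i) ∈ Jhat then hc.choose else ⟨0, hk⟩ with hcol
    refine ⟨J, hJsubS, by omega, col, ?_⟩
    intro i J' hsub hne
    have hmem : ∀ c ∈ J', (c, i) ∈ Jhat := by
      intro c hc
      have hc2 := hsub hc
      rw [Finset.mem_filter] at hc2
      have hcJ : c ∈ J := hc2.1
      obtain ⟨p, hp, hp1⟩ := Finset.mem_image.1 hcJ
      have hex : ∃ j, (c, j) ∈ Jhat := ⟨p.2, by rwa [← hp1, Prod.mk.eta]⟩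
      have hspec := hex.choose_spec
      have hcc : col c = hex.choose := by rw [hcol]; exact dif_pos hex
      rw [hc2.2] at hcc
      rwa [← hcc] at hspec
    set Jhat' := J'.image (fun c => (c, i)) with hJhat'
    have hJhat'sub : Jhat' ⊆ Jhat := by
      intro p hp
      simp only [hJhat'] at hp
      obtain ⟨c, hc, rfl⟩ := Finset.mem_image.1 hp
      exact hmem c hc
    have hc1 : Jhat'.card = J'.card := by
      simp only [hJhat']
      exact Finset.card_image_of_injective _ (fun a b hab => congrArg Prod.fst hab)
    have hbu : Jhat'.biUnion (hProd h k) = (J'.biUnion h).image (fun v => (v, i)) := by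
      ext q
      constructor
      · intro hq
        rw [Finset.mem_biUnion] at hq
        obtain ⟨p, hp, hq⟩ := hq
        simp only [hJhat'] at hp
        obtain ⟨c, hc, rfl⟩ := Finset.mem_image.1 hp
        rw [hProd, Finset.mem_image] at hq
        obtain ⟨v, hv, hvq⟩ := hq
        rw [Finset.mem_image]
        refine ⟨v, ?_, hvq⟩
        rw [Finset.mem_biUnion]
        exact ⟨c, hc, hv⟩
      · intro hq
        rw [Finset.mem_image] at hq
        obtain ⟨v, hv, hvq⟩ := hq
        rw [Finset.mem_biUnion] at hv
        obtain ⟨c, hc, hvc⟩ := hv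
        rw [Finset.mem_biUnion]
        refine ⟨(c, i), ?_, ?_⟩
        · simp only [hJhat']
          exact Finset.mem_image_of_mem _ hc
        · rw [hProd, Finset.mem_image]
          exact ⟨v, hvc, hvq⟩
    have hc2 : (Jhat'.biUnion (hProd h k)).card = (J'.biUnion h).card := by
      rw [hbu]
      exact Finset.card_image_of_injective _ (pair_inj i)
    have hlt := hJ1 Jhat' hJhat'sub (hne.image _)
    omega
  · intro A hA
    set T := S.filter (fun c => ∀ i, (c, i) ∈ A) with hT
    have hTS : T ⊆ S := Finset.filter_subset _ _
    have h2 : (S \ T).card ≤ rkOf (PIndep (C := C) (k := k)) (Shat \ A) := by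
      refine le_trans ?_ (PIndep_rk_ge _)
      refine Finset.card_le_card ?_
      intro c hc
      rw [Finset.mem_sdiff, hT, Finset.mem_filter] at hc
      have hcS : c ∈ S := hc.1
      have hcn : ¬ (c ∈ S ∧ ∀ i, (c, i) ∈ A) := hc.2
      push_neg at hcn
      obtain ⟨i, hi⟩ := hcn hcS
      refine Finset.mem_image.2 ⟨(c, i), ?_, rfl⟩
      rw [Finset.mem_sdiff]
      refine ⟨?_, hi⟩
      rw [hShat, Finset.mem_product]
      exact ⟨hcS, Finset.mem_univ i⟩
    have h1 : k * rkOf (FIndep h) T ≤ rkOf (FIndep (hProd h k)) A := by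
      obtain ⟨J0, hJ0T, hJ0i, hJ0c⟩ := (FIndep_mlite hcard).exists_basis T
      have hsub : J0 ×ˢ (Finset.univ : Finset (Fin k)) ⊆ A := by
        intro p hp
        rw [Finset.mem_product] at hp
        have hmem := hJ0T hp.1
        rw [hT, Finset.mem_filter] at hmem
        have := hmem.2 p.2
        rwa [Prod.mk.eta] at this
      have hle := MLite.le_rk (Indep := FIndep (hProd h k)) (FIndep_prod hJ0i) hsub
      rw [Finset.card_product, Finset.card_univ, Fintype.card_fin] at hle
      calc k * rkOf (FIndep h) T = rkOf (FIndep h) T * k := Nat.mul_comm _ _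
        _ = J0.card * k := by rw [hJ0c]
        _ ≤ rkOf (FIndep (hProd h k)) A := hle
    calc t ≤ (S \ T).card + k * rkOf (FIndep h) T := hmin T hTS
      _ ≤ rkOf (PIndep (C := C) (k := k)) (Shat \ A) + rkOf (FIndep (hProd h k)) A :=
          Nat.add_le_add h2 h1
      _ = rkOf (FIndep (hProd h k)) A + rkOf (PIndep (C := C) (k := k)) (Shat \ A) :=
          Nat.add_comm _ _

end Packing


section MainBridge

variable {V : Type*} [Fintype V] [DecidableEq V]
variable {E D : Type*} [Fintype E] [Fintype D] [DecidableEq E] [DecidableEq D]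
variable (ε : E → Finset V) (tl : D → Finset V) (hd : D → V)

/-- The underlying hyperedge of a class. -/
def hCl : (D ⊕ E) → Finset V := Sum.elim (fun d => insert (hd d) (tl d)) (fun e => ε e)

/-- The classes having at least one copy outside `Z`. -/
def clS (Z : Finset (D ⊕ E × V)) : Finset (D ⊕ E) :=
  Finset.univ.filter (fun c =>
    Sum.elim (fun d => Sum.inl d ∉ Z) (fun e => ∃ x ∈ ε e, Sum.inr (e, x) ∉ Z) c)

theorem hCl_card (hε : ∀ e, 2 ≤ (ε e).card) (hD : ∀ d, (tl d).Nonempty ∧ hd d ∉ tl d) :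
    ∀ c, 2 ≤ (hCl ε tl hd c).card := by
  intro c
  cases c with
  | inl d =>
    show 2 ≤ (insert (hd d) (tl d)).card
    rw [Finset.card_insert_of_notMem (hD d).2]
    have := Finset.card_pos.2 (hD d).1
    omega
  | inr e => exact hε e

/-- Bridge: a `k`-forest-coloured family of classes avoiding `Z` gives a lower
bound on the extended rank. -/
theorem bridge2 (hε : ∀ e, 2 ≤ (ε e).card) {k : ℕ} (Z : Finset (D ⊕ E × V))
    (J : Finset (D ⊕ E)) (hJS : J ⊆ clS ε Z) (col : (D ⊕ E) → Fin k)
    (hcol : ∀ i, FIndep (hCl ε tl hd) (J.filter (fun c => col c = i))) :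
    J.card ≤ extRank k ε tl hd (extGround ε \ Z) := by
  classical
  have hpickne : ∀ e : E, (ε e).Nonempty := by
    intro e
    have := hε e
    exact Finset.card_pos.1 (by omega)
  set pick : E → V := fun e =>
    if hp : ∃ x ∈ ε e, Sum.inr (e, x) ∉ Z then hp.choose else (hpickne e).choose with hpick
  set φf : (D ⊕ E) → (D ⊕ E × V) := Sum.elim Sum.inl (fun e => Sum.inr (e, pick e)) with hφf
  set ψ : (D ⊕ E × V) → (D ⊕ E) := Sum.elim Sum.inl (fun p => Sum.inr p.1) with hψ
  have hψφ : ∀ c, ψ (φf c) = c := by intro c; cases c <;> rfl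
  have hφinj : Function.Injective φf :=
    Function.LeftInverse.injective (g := ψ) hψφ
  set I := J.image φf with hI
  have hIcard : I.card = J.card := Finset.card_image_of_injective _ hφinj
  have hpickE : ∀ e : E, Sum.inr e ∈ J → pick e ∈ ε e ∧ Sum.inr (e, pick e) ∉ Z := by
    intro e he
    have := hJS he
    rw [clS, Finset.mem_filter] at this
    have hex : ∃ x ∈ ε e, Sum.inr (e, x) ∉ Z := this.2
    have hspec := hex.choose_spec
    have : pick e = hex.choose := by rw [hpick]; exact dif_pos hex
    rw [this]
    exact hspec
  have hIsub : I ⊆ extGround ε \ Z := by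
    intro z hz
    rw [hI] at hz
    obtain ⟨c, hc, rfl⟩ := Finset.mem_image.1 hz
    rw [Finset.mem_sdiff]
    cases c with
    | inl d =>
      have := hJS hc
      rw [clS, Finset.mem_filter] at this
      constructor
      · rw [extGround, Finset.mem_filter]
        exact ⟨Finset.mem_univ _, trivial⟩
      · exact this.2
    | inr e =>
      obtain ⟨h1, h2⟩ := hpickE e hc
      constructor
      · rw [extGround, Finset.mem_filter]
        exact ⟨Finset.mem_univ _, h1⟩
      · exact h2
  have hIindep : ExtIndep k ε tl hd I := by
    refine ⟨?_, ?_, ?_⟩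
    · exact hIsub.trans (Finset.sdiff_subset)
    · intro e x x' hx hx'
      rw [hI] at hx hx'
      obtain ⟨c, hc, hce⟩ := Finset.mem_image.1 hx
      obtain ⟨c', hc', hce'⟩ := Finset.mem_image.1 hx'
      cases c with
      | inl d => exact absurd hce (by simp [hφf])
      | inr e1 =>
        cases c' with
        | inl d => exact absurd hce' (by simp [hφf])
        | inr e2 =>
          simp only [hφf, Sum.elim_inr, Sum.inr.injEq, Prod.mk.injEq] at hce hce'
          obtain ⟨rfl, rfl⟩ := hce
          obtain ⟨rfl, rfl⟩ := hce'
          rfl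
    · refine ⟨fun z => col (ψ z), ?_⟩
      intro Z' hZ'I hZ'ne hmono
      obtain ⟨i, hi⟩ := hmono
      set J' := Z'.image ψ with hJ'
      have hinj : Set.InjOn ψ Z' := by
        intro z1 hz1 z2 hz2 heq
        have hz1' := hZ'I hz1
        have hz2' := hZ'I hz2
        rw [hI] at hz1' hz2'
        obtain ⟨c1, _, rfl⟩ := Finset.mem_image.1 hz1'
        obtain ⟨c2, _, rfl⟩ := Finset.mem_image.1 hz2'
        rw [hψφ c1, hψφ c2] at heq
        rw [heq]
      have hJ'card : J'.card = Z'.card := Finset.card_image_of_injOn hinj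
      have hJ'sub : J' ⊆ J.filter (fun c => col c = i) := by
        intro c hc
        rw [hJ'] at hc
        obtain ⟨z, hz, rfl⟩ := Finset.mem_image.1 hc
        have hzI := hZ'I hz
        rw [hI] at hzI
        obtain ⟨c0, hc0, rfl⟩ := Finset.mem_image.1 hzI
        rw [hψφ c0]
        rw [Finset.mem_filter]
        refine ⟨hc0, ?_⟩
        have h5 := hi _ hz
        simp only [hψφ c0] at h5
        exact h5
      have hbu : Z'.biUnion (extUnder ε tl hd) = J'.biUnion (hCl ε tl hd) := by
        have hcong : ∀ z : D ⊕ E × V, extUnder ε tl hd z = hCl ε tl hd (ψ z) := by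
          intro z
          cases z with
          | inl d => rfl
          | inr p => rfl
        ext v
        simp only [Finset.mem_biUnion, hJ']
        constructor
        · rintro ⟨z, hz, hv⟩
          exact ⟨ψ z, Finset.mem_image_of_mem _ hz, by rw [← hcong]; exact hv⟩
        · rintro ⟨c, hc, hv⟩
          obtain ⟨z, hz, rfl⟩ := Finset.mem_image.1 hc
          exact ⟨z, hz, by rw [hcong]; exact hv⟩
      have hne' : J'.Nonempty := hZ'ne.image ψ
      have := hcol i J' hJ'sub hne'
      rw [hbu]
      omega
  have hmem : I ∈ (extGround ε \ Z).powerset.filter (ExtIndep k ε tl hd) := by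
    rw [Finset.mem_filter, Finset.mem_powerset]
    exact ⟨hIsub, hIindep⟩
  have : I.card ≤ extRank k ε tl hd (extGround ε \ Z) := by
    rw [extRank]
    have h1 := Finset.le_sup (f := fun I => if ExtIndep k ε tl hd I then I.card else 0)
      (Finset.mem_powerset.2 hIsub)
    simp only [if_pos hIindep] at h1
    exact h1
  omega

end MainBridge



section Star

variable {V : Type*} [Fintype V] [DecidableEq V]
variable {E D : Type*} [Fintype E] [Fintype D] [DecidableEq E] [DecidableEq D]

theorem card_filter_sumtype (pd : D → Prop) (pe : E → Prop) :
    (Finset.univ.filter (fun c : D ⊕ E => Sum.elim pd pe c)).card =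
      (Finset.univ.filter pd).card + (Finset.univ.filter pe).card := by
  classical
  have hdis : Disjoint
      ((Finset.univ.filter pd).map ⟨Sum.inl, Sum.inl_injective⟩)
      ((Finset.univ.filter pe).map ⟨Sum.inr, Sum.inr_injective⟩) := by
    rw [Finset.disjoint_left]
    rintro x hx hy
    rw [Finset.mem_map] at hx hy
    obtain ⟨d, _, rfl⟩ := hx
    obtain ⟨e, _, he⟩ := hy
    exact absurd he (by simp)
  have hunion : (Finset.univ.filter (fun c : D ⊕ E => Sum.elim pd pe c)) =
      ((Finset.univ.filter pd).map ⟨Sum.inl, Sum.inl_injective⟩) ∪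
      ((Finset.univ.filter pe).map ⟨Sum.inr, Sum.inr_injective⟩) := by
    ext x
    cases x with
    | inl d => simp
    | inr e => simp
  rw [hunion, Finset.card_union_of_disjoint hdis, Finset.card_map, Finset.card_map]

theorem sum_headCount (hd : D → V) (Z : Finset (D ⊕ E × V)) (W : Finset V) :
    ∑ v ∈ W, extHeadCount hd Z v = (Z.filter (fun z => extHead hd z ∈ W)).card := by
  classical
  rw [Finset.card_eq_sum_card_fiberwise
    (f := extHead hd) (s := Z.filter (fun z => extHead hd z ∈ W)) (t := W) (fun z hz => (Finset.mem_filter.1 hz).2)]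
  refine Finset.sum_congr rfl ?_
  intro v hv
  rw [extHeadCount]
  congr 1
  ext z
  simp only [Finset.mem_filter]
  constructor
  · rintro ⟨hz, h2⟩
    exact ⟨⟨hz, h2 ▸ hv⟩, h2⟩
  · rintro ⟨⟨hz, _⟩, h2⟩
    exact ⟨hz, h2⟩

theorem star_bound
    (ε : E → Finset V) (tl : D → Finset V) (hd : D → V) (hε : ∀ e, 2 ≤ (ε e).card)
    (f g : V → ℕ) (k l' : ℕ)
    (hii : ∀ P : Finset (Finset V), IsSubpartition P →
        (k : ℤ) * P.card -
            min ((l' : ℤ) - ∑ v ∈ Finset.univ \ P.biUnion id, (f v : ℤ))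
              (∑ v ∈ P.biUnion id, (min k (g v) : ℤ))
          ≤ ((Finset.univ.filter fun e : E => ∃ X ∈ P, hypEnters (ε e) X).card +
              (Finset.univ.filter fun d : D => ∃ X ∈ P, dypEnters (tl d, hd d) X).card
                : ℤ))
    (Z : Finset (D ⊕ E × V))
    (φ : V → ℕ) (hφ : ∀ v, φ v ≤ k) (M : ℤ)
    (hM : ∀ Q : Finset (Finset V), ∀ R : Finset V,
        Disjoint R (Q.biUnion id) →
        min ((l' : ℤ) - ∑ v ∈ Finset.univ \ Q.biUnion id, (f v : ℤ))
            (∑ v ∈ Q.biUnion id, (min k (g v) : ℤ)) + ∑ v ∈ R, (φ v : ℤ) ≤ M)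
    (Pp : Finset (Finset V)) (hPne : ∀ X ∈ Pp, X.Nonempty)
    (hPdis : ∀ X ∈ Pp, ∀ Y ∈ Pp, X ≠ Y → Disjoint X Y) :
    (k : ℤ) * Pp.card - M ≤
      (((clS ε Z).filter (fun c => ∀ X ∈ Pp, ¬ hCl ε tl hd c ⊆ X)).card : ℤ) +
        ∑ v : V, min ((extHeadCount hd Z v : ℤ)) ((k : ℤ) - φ v) := by
  classical
  set Q := Pp.filter (fun P => ∀ v ∈ P, extHeadCount hd Z v + φ v ≤ k) with hQdef
  have hQP : Q ⊆ Pp := Finset.filter_subset _ _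
  have hQsub : IsSubpartition Q :=
    ⟨fun X hX => hPne X (hQP hX), fun X hX Y hY hXY => hPdis X (hQP hX) Y (hQP hY) hXY⟩
  have hs1 := hii Q hQsub
  set pd : D → Prop := fun d => ∃ X ∈ Q, dypEnters (tl d, hd d) X with hpd
  set pe : E → Prop := fun e => ∃ X ∈ Q, hypEnters (ε e) X with hpe
  set EnterQ := Finset.univ.filter (fun c : D ⊕ E => Sum.elim pd pe c) with hEnterQ
  have hcount : EnterQ.card =
      (Finset.univ.filter fun d : D => ∃ X ∈ Q, dypEnters (tl d, hd d) X).card +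
      (Finset.univ.filter fun e : E => ∃ X ∈ Q, hypEnters (ε e) X).card := by
    convert card_filter_sumtype pd pe using 3 <;>
    · ext x
      simp only [Finset.mem_filter]
      exact Iff.rfl
  set crossS := (clS ε Z).filter (fun c => ∀ X ∈ Pp, ¬ hCl ε tl hd c ⊆ X) with hcrossS
  set E2 := EnterQ.filter (fun c => ¬ c ∈ clS ε Z) with hE2
  -- splitting the entering classes
  have hse : EnterQ.card ≤ crossS.card + E2.card := by
    have h1 : EnterQ.filter (fun c => c ∈ clS ε Z) ⊆ crossS := by
      intro c hc
      rw [Finset.mem_filter] at hc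
      obtain ⟨hc1, hc2⟩ := hc
      rw [hEnterQ, Finset.mem_filter] at hc1
      rw [hcrossS, Finset.mem_filter]
      refine ⟨hc2, ?_⟩
      intro P hP hsub
      cases c with
      | inl d =>
        have hent : pd d := hc1.2
        obtain ⟨X, hXQ, hhd, htl⟩ := hent
        have hXP : X ∈ Pp := hQP hXQ
        simp only [dypEnters] at hhd htl
        have hhdP : hd d ∈ P := hsub (Finset.mem_insert_self _ _)
        have hPX : P = X := by
          by_contra hne
          exact Finset.disjoint_left.1 (hPdis P hP X hXP hne) hhdP hhd
        obtain ⟨w, hw⟩ := htl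
        rw [Finset.mem_sdiff] at hw
        exact hw.2 (hPX ▸ hsub (Finset.mem_insert_of_mem hw.1))
      | inr e =>
        have hent : pe e := hc1.2
        obtain ⟨X, hXQ, ⟨w1, hw1⟩, ⟨w2, hw2⟩⟩ := hent
        have hXP : X ∈ Pp := hQP hXQ
        rw [Finset.mem_inter] at hw1
        rw [Finset.mem_sdiff] at hw2
        have hPX : P = X := by
          by_contra hne
          exact Finset.disjoint_left.1 (hPdis P hP X hXP hne) (hsub hw1.1) hw1.2
        exact hw2.2 (hPX ▸ hsub hw2.1)
    have h2 := Finset.card_filter_add_card_filter_not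
      (s := EnterQ) (p := fun c => c ∈ clS ε Z)
    have h3 := Finset.card_le_card h1
    rw [← hE2] at h2
    omega
  -- injecting the Z-only entering classes into copies in Z with head in ∪Q
  have hE2b : E2.card ≤ (Z.filter (fun z => extHead hd z ∈ Q.biUnion id)).card := by
    have hpickne : ∀ e : E, (ε e).Nonempty := by
      intro e
      have := hε e
      exact Finset.card_pos.1 (by omega)
    set pickQ : E → V := fun e =>
      if hp : ∃ x, x ∈ ε e ∧ x ∈ Q.biUnion id then hp.choose else (hpickne e).choose
      with hpickQ
    set θ : (D ⊕ E) → (D ⊕ E × V) := fun c =>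
      match c with
      | Sum.inl d => Sum.inl d
      | Sum.inr e => Sum.inr (e, pickQ e)
      with hθ
    refine Finset.card_le_card_of_injOn θ ?_ ?_
    · intro c hc
      rw [Finset.mem_coe] at hc ⊢
      rw [hE2, Finset.mem_filter] at hc
      obtain ⟨hc1, hc2⟩ := hc
      rw [hEnterQ, Finset.mem_filter] at hc1
      have hc2' : ¬ (Sum.elim (fun d => Sum.inl d ∉ Z)
          (fun e => ∃ x ∈ ε e, Sum.inr (e, x) ∉ Z) c) := by
        intro hcon
        exact hc2 (by rw [clS, Finset.mem_filter]; exact ⟨Finset.mem_univ c, hcon⟩)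
      cases c with
      | inl d =>
        have hent : pd d := hc1.2
        obtain ⟨X, hXQ, hhd, -⟩ := hent
        have hZd : Sum.inl d ∈ Z := not_not.1 hc2'
        rw [Finset.mem_filter]
        refine ⟨hZd, ?_⟩
        show hd d ∈ Q.biUnion id
        rw [Finset.mem_biUnion]
        exact ⟨X, hXQ, hhd⟩
      | inr e =>
        have hent : pe e := hc1.2
        obtain ⟨X, hXQ, ⟨w1, hw1⟩, -⟩ := hent
        rw [Finset.mem_inter] at hw1
        have hall : ∀ x ∈ ε e, Sum.inr (e, x) ∈ Z := by
          have hnn : ¬ ∃ x ∈ ε e, Sum.inr (e, x) ∉ Z := hc2'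
          push_neg at hnn
          exact hnn
        have hex : ∃ x, x ∈ ε e ∧ x ∈ Q.biUnion id :=
          ⟨w1, hw1.1, Finset.mem_biUnion.2 ⟨X, hXQ, hw1.2⟩⟩
        have hspec := hex.choose_spec
        have hpq : pickQ e = hex.choose := by rw [hpickQ]; exact dif_pos hex
        rw [Finset.mem_filter]
        constructor
        · exact hall (pickQ e) (by rw [hpq]; exact hspec.1)
        · show pickQ e ∈ Q.biUnion id
          rw [hpq]
          exact hspec.2
    · intro c1 hc1 c2 hc2 heq
      cases c1 with
      | inl d1 =>
        cases c2 with
        | inl d2 => simpa [hθ] using heq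
        | inr e2 => exact absurd heq (by simp [hθ])
      | inr e1 =>
        cases c2 with
        | inl d2 => exact absurd heq (by simp [hθ])
        | inr e2 =>
          simp only [hθ, Sum.inr.injEq, Prod.mk.injEq] at heq
          rw [heq.1]
  -- head count over ∪Q as a sum of min-terms
  have hQmin : ∀ v ∈ Q.biUnion id,
      min ((extHeadCount hd Z v : ℤ)) ((k : ℤ) - φ v) = (extHeadCount hd Z v : ℤ) := by
    intro v hv
    rw [Finset.mem_biUnion] at hv
    obtain ⟨X, hXQ, hvX⟩ := hv
    rw [hQdef, Finset.mem_filter] at hXQ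
    have h7 := hXQ.2 v hvX
    have hc := hφ v
    omega
  have hsumQ : ∑ v ∈ Q.biUnion id, (extHeadCount hd Z v : ℤ) =
      ((Z.filter (fun z => extHead hd z ∈ Q.biUnion id)).card : ℤ) := by
    rw [← sum_headCount hd Z (Q.biUnion id)]
    push_cast
    rfl
  -- selecting a deficient vertex in each member of Pp \ Q
  have hsel : ∃ R : Finset V, R.card = (Pp \ Q).card ∧ Disjoint R (Q.biUnion id) ∧
      ∀ v ∈ R, k ≤ extHeadCount hd Z v + φ v := by
    rcases Finset.eq_empty_or_nonempty (Pp \ Q) with he | hne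
    · exact ⟨∅, by rw [he]; simp, Finset.disjoint_empty_left _, by simp⟩
    · obtain ⟨P₀, hP₀⟩ := hne
      obtain ⟨v₀, hv₀⟩ := hPne P₀ (Finset.mem_sdiff.1 hP₀).1
      set vsel : Finset V → V := fun P =>
        if hp : ∃ v ∈ P, ¬ (extHeadCount hd Z v + φ v ≤ k) then hp.choose else v₀
        with hvsel
      have hvmem : ∀ P ∈ Pp \ Q, vsel P ∈ P ∧ k < extHeadCount hd Z (vsel P) + φ (vsel P) := by
        intro P hP
        rw [Finset.mem_sdiff] at hP
        have hnQ := hP.2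
        rw [hQdef, Finset.mem_filter] at hnQ
        have hex : ∃ v ∈ P, ¬ (extHeadCount hd Z v + φ v ≤ k) := by
          by_contra hcon
          push_neg at hcon
          exact hnQ ⟨hP.1, fun v hv => hcon v hv⟩
        have hspec := hex.choose_spec
        have hvp : vsel P = hex.choose := by rw [hvsel]; exact dif_pos hex
        rw [hvp]
        obtain ⟨hs1', hs2'⟩ := hspec
        exact ⟨hs1', by omega⟩
      refine ⟨(Pp \ Q).image vsel, ?_, ?_, ?_⟩
      · refine Finset.card_image_of_injOn ?_
        intro P1 hP1 P2 hP2 heq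
        by_contra hne12
        have h2 := (hvmem P2 hP2).1
        exact Finset.disjoint_left.1
          (hPdis P1 (Finset.mem_sdiff.1 hP1).1 P2 (Finset.mem_sdiff.1 hP2).1 hne12)
          (heq ▸ (hvmem P1 hP1).1) h2
      · rw [Finset.disjoint_left]
        intro v hv hvQ
        obtain ⟨P, hP, rfl⟩ := Finset.mem_image.1 hv
        rw [Finset.mem_biUnion] at hvQ
        obtain ⟨X, hXQ, hvX⟩ := hvQ
        have hPX : P ≠ X := fun h => ((Finset.mem_sdiff.1 hP).2) (h ▸ hXQ)
        exact Finset.disjoint_left.1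
          (hPdis P (Finset.mem_sdiff.1 hP).1 X (hQP hXQ) hPX) ((hvmem P hP).1) hvX
      · intro v hv
        obtain ⟨P, hP, rfl⟩ := Finset.mem_image.1 hv
        have := (hvmem P hP).2
        omega
  obtain ⟨R, hRcard, hRdis, hRk⟩ := hsel
  have hRmin : ∀ v ∈ R, min ((extHeadCount hd Z v : ℤ)) ((k : ℤ) - φ v) = (k : ℤ) - φ v := by
    intro v hv
    have h8 := hRk v hv
    have h9 := hφ v
    omega
  have hmin0 : ∀ v : V, 0 ≤ min ((extHeadCount hd Z v : ℤ)) ((k : ℤ) - φ v) := by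
    intro v
    have := hφ v
    omega
  have hdisQR : Disjoint (Q.biUnion id) R :=
    Finset.disjoint_left.2 fun a ha hb => Finset.disjoint_left.1 hRdis hb ha
  have hsplit2 : ∑ v ∈ Q.biUnion id, min ((extHeadCount hd Z v : ℤ)) ((k : ℤ) - φ v) +
      ∑ v ∈ R, min ((extHeadCount hd Z v : ℤ)) ((k : ℤ) - φ v) ≤
      ∑ v : V, min ((extHeadCount hd Z v : ℤ)) ((k : ℤ) - φ v) := by
    rw [← Finset.sum_union hdisQR]
    refine Finset.sum_le_sum_of_subset_of_nonneg (Finset.subset_univ _) ?_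
    intro v _ _
    exact hmin0 v
  have hcards : (Pp \ Q).card + Q.card = Pp.card := by
    rw [Finset.card_sdiff_of_subset hQP]
    have := Finset.card_le_card hQP
    omega
  have hMQ := hM Q R hRdis
  have e1 : ∑ v ∈ Q.biUnion id, min ((extHeadCount hd Z v : ℤ)) ((k : ℤ) - φ v) =
      ((Z.filter (fun z => extHead hd z ∈ Q.biUnion id)).card : ℤ) := by
    rw [Finset.sum_congr rfl hQmin, hsumQ]
  have e2 : ∑ v ∈ R, min ((extHeadCount hd Z v : ℤ)) ((k : ℤ) - φ v) =
      (k : ℤ) * R.card - ∑ v ∈ R, (φ v : ℤ) := by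
    rw [Finset.sum_congr rfl hRmin, Finset.sum_sub_distrib, Finset.sum_const,
      nsmul_eq_mul, mul_comm]
  have hce : (((Finset.univ.filter fun e : E => ∃ X ∈ Q, hypEnters (ε e) X).card +
        (Finset.univ.filter fun d : D => ∃ X ∈ Q, dypEnters (tl d, hd d) X).card : ℕ) : ℤ)
      ≤ (crossS.card : ℤ) +
        ((Z.filter (fun z => extHead hd z ∈ Q.biUnion id)).card : ℤ) := by
    have h10 : (Finset.univ.filter fun e : E => ∃ X ∈ Q, hypEnters (ε e) X).card +
        (Finset.univ.filter fun d : D => ∃ X ∈ Q, dypEnters (tl d, hd d) X).card ≤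
        crossS.card + (Z.filter (fun z => extHead hd z ∈ Q.biUnion id)).card := by
      omega
    exact_mod_cast h10
  have hPpZ : ((Pp \ Q).card : ℤ) + (Q.card : ℤ) = (Pp.card : ℤ) := by exact_mod_cast hcards
  have hPpsplit : (k : ℤ) * Pp.card = (k : ℤ) * Q.card + (k : ℤ) * (Pp \ Q).card := by
    rw [← hPpZ]; ring
  have hkR : (k : ℤ) * ((Pp \ Q).card : ℤ) = (k : ℤ) * (R.card : ℤ) := by rw [hRcard]
  linarith [hs1, hce, e1, e2, hMQ, hsplit2, hPpsplit, hkR]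

end Star



section RankLower

variable {V : Type*} [Fintype V] [DecidableEq V]
variable {E D : Type*} [Fintype E] [Fintype D] [DecidableEq E] [DecidableEq D]

theorem rank_lower
    (ε : E → Finset V) (tl : D → Finset V) (hd : D → V)
    (hε : ∀ e, 2 ≤ (ε e).card) (hD : ∀ d, (tl d).Nonempty ∧ hd d ∉ tl d)
    (f g : V → ℕ) (k l' : ℕ) (hk : 0 < k)
    (hii : ∀ P : Finset (Finset V), IsSubpartition P →
        (k : ℤ) * P.card -
            min ((l' : ℤ) - ∑ v ∈ Finset.univ \ P.biUnion id, (f v : ℤ))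
              (∑ v ∈ P.biUnion id, (min k (g v) : ℤ))
          ≤ ((Finset.univ.filter fun e : E => ∃ X ∈ P, hypEnters (ε e) X).card +
              (Finset.univ.filter fun d : D => ∃ X ∈ P, dypEnters (tl d, hd d) X).card
                : ℤ))
    (Z : Finset (D ⊕ E × V))
    (φ : V → ℕ) (hφ : ∀ v, φ v ≤ k) (M : ℤ)
    (hM : ∀ Q : Finset (Finset V), ∀ R : Finset V,
        Disjoint R (Q.biUnion id) →
        min ((l' : ℤ) - ∑ v ∈ Finset.univ \ Q.biUnion id, (f v : ℤ))
            (∑ v ∈ Q.biUnion id, (min k (g v) : ℤ)) + ∑ v ∈ R, (φ v : ℤ) ≤ M) :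
    (k : ℤ) * Fintype.card V - M -
        ∑ v : V, min ((extHeadCount hd Z v : ℤ)) ((k : ℤ) - φ v)
      ≤ (extRank k ε tl hd (extGround ε \ Z) : ℤ) := by
  classical
  set N : ℤ := (k : ℤ) * Fintype.card V - M -
      ∑ v : V, min ((extHeadCount hd Z v : ℤ)) ((k : ℤ) - φ v) with hN
  set S := clS ε Z with hS
  have hcard := hCl_card ε tl hd hε hD
  have hmin : ∀ T ⊆ S, N.toNat ≤ (S \ T).card + k * rkOf (FIndep (hCl ε tl hd)) T := by
    intro T hTS
    obtain ⟨Pp, hPne, hPdis, hPcov, hlor⟩ := lorea_cert hcard T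
    have hstar := star_bound ε tl hd hε f g k l' hii Z φ hφ M hM Pp hPne hPdis
    rw [← hS] at hstar
    have hcross : ((S.filter (fun c => ∀ X ∈ Pp, ¬ hCl ε tl hd c ⊆ X)).card : ℤ) ≤
        ((T.filter (fun c => ∀ X ∈ Pp, ¬ hCl ε tl hd c ⊆ X)).card : ℤ) +
          ((S \ T).card : ℤ) := by
      have hsub : S.filter (fun c => ∀ X ∈ Pp, ¬ hCl ε tl hd c ⊆ X) ⊆
          (T.filter (fun c => ∀ X ∈ Pp, ¬ hCl ε tl hd c ⊆ X)) ∪ (S \ T) := by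
        intro c hc
        rw [Finset.mem_filter] at hc
        by_cases hcT : c ∈ T
        · exact Finset.mem_union_left _ (Finset.mem_filter.2 ⟨hcT, hc.2⟩)
        · exact Finset.mem_union_right _ (Finset.mem_sdiff.2 ⟨hc.1, hcT⟩)
      have h9 := (Finset.card_le_card hsub).trans (Finset.card_union_le _ _)
      exact_mod_cast h9
    have hsumX : ∑ X ∈ Pp, ((X.card : ℤ) - 1) = (Fintype.card V : ℤ) - Pp.card := by
      have h1 : ∑ X ∈ Pp, X.card = Fintype.card V := by
        have hbu := Finset.card_biUnion
          (s := Pp) (t := id) (fun X hX Y hY hXY => hPdis X hX Y hY hXY)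
        rw [hPcov] at hbu
        rw [← Finset.card_univ, hbu]
        rfl
      have h2 : (∑ X ∈ Pp, (X.card : ℤ)) = (Fintype.card V : ℤ) := by exact_mod_cast h1
      rw [Finset.sum_sub_distrib, Finset.sum_const, nsmul_eq_mul, mul_one, h2]
    have hlorZ : (∑ X ∈ Pp, ((X.card : ℤ) - 1)) +
        ((T.filter (fun c => ∀ X ∈ Pp, ¬ hCl ε tl hd c ⊆ X)).card : ℤ) ≤
        (rkOf (FIndep (hCl ε tl hd)) T : ℤ) := by
      have hsum_eq : ((∑ X ∈ Pp, (X.card - 1) : ℕ) : ℤ) = ∑ X ∈ Pp, ((X.card : ℤ) - 1) := by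
        rw [Nat.cast_sum]
        refine Finset.sum_congr rfl ?_
        intro X hX
        have := Finset.card_pos.2 (hPne X hX)
        omega
      rw [← hsum_eq]
      exact_mod_cast hlor
    have hfinal : N ≤ ((S \ T).card : ℤ) +
        (k : ℤ) * (rkOf (FIndep (hCl ε tl hd)) T : ℤ) := by
      have hk1 : (1 : ℤ) ≤ (k : ℤ) := by exact_mod_cast hk
      set a : ℤ := ∑ X ∈ Pp, ((X.card : ℤ) - 1) with ha
      set b : ℤ := ((T.filter (fun c => ∀ X ∈ Pp, ¬ hCl ε tl hd c ⊆ X)).card : ℤ) with hb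
      set r : ℤ := (rkOf (FIndep (hCl ε tl hd)) T : ℤ) with hr
      have hb0 : (0 : ℤ) ≤ b := by rw [hb]; exact Int.ofNat_nonneg _
      have m1 : (k : ℤ) * (a + b) ≤ (k : ℤ) * r :=
        mul_le_mul_of_nonneg_left hlorZ (by positivity)
      have m2 : b ≤ (k : ℤ) * b := le_mul_of_one_le_left hb0 hk1
      have m4 : (k : ℤ) * (a + b) = (k : ℤ) * a + (k : ℤ) * b := by ring
      have m5 : (k : ℤ) * a =
          (k : ℤ) * (Fintype.card V : ℤ) - (k : ℤ) * (Pp.card : ℤ) := by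
        rw [hsumX]; ring
      have hmin0 : ∀ v : V, 0 ≤ min ((extHeadCount hd Z v : ℤ)) ((k : ℤ) - φ v) := by
        intro v
        have := hφ v
        omega
      linarith [hstar, hcross]
    refine Int.toNat_le.2 ?_
    refine le_trans hfinal ?_
    push_cast
    linarith
  obtain ⟨J, hJS, hJt, col, hcol⟩ := kforest_packing hcard hk S N.toNat hmin
  have hbr := bridge2 ε tl hd hε Z J hJS col hcol
  have h1 : N ≤ (J.card : ℤ) :=
    le_trans (Int.self_le_toNat N) (by exact_mod_cast hJt)
  exact le_trans h1 (by exact_mod_cast hbr)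

end RankLower



section RankUpper

variable {V : Type*} [Fintype V] [DecidableEq V]
variable {E D : Type*} [Fintype E] [Fintype D] [DecidableEq E] [DecidableEq D]

theorem rank_upper
    (ε : E → Finset V) (tl : D → Finset V) (hd : D → V) (k : ℕ)
    (P : Finset (Finset V)) (Z0 : Finset (D ⊕ E × V))
    (hZ0 : ∀ z ∈ extGround ε, z ∉ Z0 →
      (∃ X ∈ P, extHead hd z ∈ X ∧
        ((Sum.elim tl (fun p : E × V => (ε p.1).erase p.2) z) \ X).Nonempty) ∨
      (∃ X ∈ P, extUnder ε tl hd z ⊆ X)) :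
    extRank k ε tl hd (extGround ε \ Z0) ≤
      k * (∑ X ∈ P, (X.card - 1)) +
        ((Finset.univ.filter fun e : E => ∃ X ∈ P, hypEnters (ε e) X).card +
          (Finset.univ.filter fun d : D => ∃ X ∈ P, dypEnters (tl d, hd d) X).card) := by
  classical
  rw [extRank]
  refine Finset.sup_le ?_
  intro I hI
  rw [Finset.mem_powerset] at hI
  by_cases hind : ExtIndep k ε tl hd I
  swap
  · rw [if_neg hind]
    omega
  rw [if_pos hind]
  obtain ⟨hIg, hpar, c, hc⟩ := hind
  have hEI : ∀ z ∈ I, ¬ (∃ X ∈ P, extUnder ε tl hd z ⊆ X) →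
      (∃ X ∈ P, extHead hd z ∈ X ∧
        ((Sum.elim tl (fun p : E × V => (ε p.1).erase p.2) z) \ X).Nonempty) := by
    intro z hz hni
    have h1 := hI hz
    rw [Finset.mem_sdiff] at h1
    rcases hZ0 z h1.1 h1.2 with h | h
    · exact h
    · exact absurd h hni
  set Iind := I.filter (fun z => ∃ X ∈ P, extUnder ε tl hd z ⊆ X) with hIind
  set Icr := I.filter (fun z => ¬ ∃ X ∈ P, extUnder ε tl hd z ⊆ X) with hIcr
  have hcardsplit : Iind.card + Icr.card = I.card := by
    rw [hIind, hIcr]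
    exact Finset.card_filter_add_card_filter_not
      (s := I) (p := fun z => ∃ X ∈ P, extUnder ε tl hd z ⊆ X)
  -- bound on the induced part
  have hbound1 : Iind.card ≤ k * (∑ X ∈ P, (X.card - 1)) := by
    set chX : (D ⊕ E × V) → Finset V := fun z =>
      if h : ∃ X ∈ P, extUnder ε tl hd z ⊆ X then h.choose else ∅ with hchX
    have hchP : ∀ z ∈ Iind, chX z ∈ P ∧ extUnder ε tl hd z ⊆ chX z := by
      intro z hz
      rw [hIind, Finset.mem_filter] at hz
      have hex := hz.2
      have hspec := hex.choose_spec
      have heq : chX z = hex.choose := by rw [hchX]; exact dif_pos hex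
      rw [heq]
      exact hspec
    have hfib := Finset.card_eq_sum_card_fiberwise
      (s := Iind) (t := P ×ˢ (Finset.univ : Finset (Fin k))) (f := fun z => (chX z, c z))
      (fun z hz => Finset.mem_product.2 ⟨(hchP z hz).1, Finset.mem_univ _⟩)
    rw [hfib]
    have hfibb : ∀ q ∈ P ×ˢ (Finset.univ : Finset (Fin k)),
        (Iind.filter (fun z => (chX z, c z) = q)).card ≤ q.1.card - 1 := by
      intro q hq
      rcases Finset.eq_empty_or_nonempty (Iind.filter (fun z => (chX z, c z) = q))
        with he | hne
      · rw [he]; simp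
      · have hsubI : Iind.filter (fun z => (chX z, c z) = q) ⊆ I :=
          (Finset.filter_subset _ _).trans (Finset.filter_subset _ _)
        have hmono : ∃ i : Fin k, ∀ z ∈ Iind.filter (fun z => (chX z, c z) = q), c z = i := by
          refine ⟨q.2, ?_⟩
          intro z hz
          rw [Finset.mem_filter] at hz
          rw [Prod.ext_iff] at hz
          exact hz.2.2
        have hlt := hc _ hsubI hne hmono
        have hbu : (Iind.filter (fun z => (chX z, c z) = q)).biUnion (extUnder ε tl hd)
            ⊆ q.1 := by
          intro v hv
          rw [Finset.mem_biUnion] at hv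
          obtain ⟨z, hz, hvz⟩ := hv
          rw [Finset.mem_filter] at hz
          have h3 := hchP z hz.1
          have h4 : chX z = q.1 := by
            have := hz.2
            rw [Prod.ext_iff] at this
            exact this.1
          exact (h4 ▸ h3.2) hvz
        have h5 := Finset.card_le_card hbu
        omega
    calc ∑ q ∈ P ×ˢ (Finset.univ : Finset (Fin k)),
          (Iind.filter (fun z => (chX z, c z) = q)).card
        ≤ ∑ q ∈ P ×ˢ (Finset.univ : Finset (Fin k)), (q.1.card - 1) :=
          Finset.sum_le_sum hfibb
      _ = k * ∑ X ∈ P, (X.card - 1) := by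
          rw [Finset.sum_product, Finset.mul_sum]
          refine Finset.sum_congr rfl ?_
          intro X hX
          simp only []
          rw [Finset.sum_const, Finset.card_univ, Fintype.card_fin, smul_eq_mul]
  -- bound on the crossing part
  have hbound2 : Icr.card ≤
      ((Finset.univ.filter fun e : E => ∃ X ∈ P, hypEnters (ε e) X).card +
        (Finset.univ.filter fun d : D => ∃ X ∈ P, dypEnters (tl d, hd d) X).card) := by
    set pd' : D → Prop := fun d => ∃ X ∈ P, dypEnters (tl d, hd d) X with hpd'
    set pe' : E → Prop := fun e => ∃ X ∈ P, hypEnters (ε e) X with hpe'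
    have hWcard : (Finset.univ.filter (fun c : D ⊕ E => Sum.elim pd' pe' c)).card =
        (Finset.univ.filter fun d : D => ∃ X ∈ P, dypEnters (tl d, hd d) X).card +
        (Finset.univ.filter fun e : E => ∃ X ∈ P, hypEnters (ε e) X).card := by
      convert card_filter_sumtype pd' pe' using 3 <;>
      · ext x
        simp only [Finset.mem_filter]
        exact Iff.rfl
    have hinj : Icr.card ≤
        (Finset.univ.filter (fun c : D ⊕ E => Sum.elim pd' pe' c)).card := by
      refine Finset.card_le_card_of_injOn
        (Sum.elim Sum.inl (fun p : E × V => Sum.inr p.1)) ?_ ?_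
      · intro z hz
        rw [Finset.mem_coe] at hz ⊢
        rw [hIcr, Finset.mem_filter] at hz
        obtain ⟨hzI, hzni⟩ := hz
        obtain ⟨X, hX, hhead, htail⟩ := hEI z hzI hzni
        rw [Finset.mem_filter]
        refine ⟨Finset.mem_univ _, ?_⟩
        cases z with
        | inl d =>
          show pd' d
          exact ⟨X, hX, hhead, htail⟩
        | inr p =>
          show pe' p.1
          obtain ⟨w, hw⟩ := htail
          rw [Finset.mem_sdiff] at hw
          have hxe : p.2 ∈ ε p.1 := by
            have := hIg hzI
            rw [extGround, Finset.mem_filter] at this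
            exact this.2
          refine ⟨X, hX, ⟨p.2, Finset.mem_inter.2 ⟨hxe, hhead⟩⟩, ?_⟩
          exact ⟨w, Finset.mem_sdiff.2 ⟨Finset.mem_of_mem_erase hw.1, hw.2⟩⟩
      · intro z1 hz1 z2 hz2 heq
        have hz1I : z1 ∈ I := Finset.mem_of_mem_filter _ (by rw [hIcr] at hz1; exact hz1)
        have hz2I : z2 ∈ I := Finset.mem_of_mem_filter _ (by rw [hIcr] at hz2; exact hz2)
        cases z1 with
        | inl d1 =>
          cases z2 with
          | inl d2 => simpa using heq
          | inr p2 => exact absurd heq (by simp)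
        | inr p1 =>
          cases z2 with
          | inl d2 => exact absurd heq (by simp)
          | inr p2 =>
            simp only [Sum.elim_inr, Sum.inr.injEq] at heq
            have hx := hpar p1.1 p1.2 p2.2 (by rw [Prod.mk.eta]; exact hz1I)
              (by rw [heq, Prod.mk.eta]; exact hz2I)
            have hp12 : p1 = p2 := Prod.ext heq hx
            rw [hp12]
    omega
  omega

end RankUpper


/-- Lemma (c) of the paper: for a mixed hypergraph `ℱ = (V, ℰ ∪ 𝒜)`, functions
`f, g : V → ℕ` with `min{k, g(v)} ≥ f(v)`, positive integers `k, ℓ, ℓ'` and the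
rank function `r` of the extended `k`-hypergraphic matroid `M_ℱ^k` on
`𝒜 ∪ 𝒜_ℰ`, the two conditions (i) (inequalities (19) and (20) for every
`𝒵 ⊆ 𝒜 ∪ 𝒜_ℰ`) and (ii) (the subpartition condition (18)) are equivalent. -/
theorem rank_conditions_iff_subpartition_condition
    (V : Type) [Fintype V] [DecidableEq V]
    (E D : Type) [Fintype E] [Fintype D] [DecidableEq E] [DecidableEq D]
    (ε : E → Finset V) (hε : ∀ e, 2 ≤ (ε e).card)
    (tl : D → Finset V) (hd : D → V) (hD : ∀ d, (tl d).Nonempty ∧ hd d ∉ tl d)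
    (f g : V → ℕ) (k l l' : ℕ) (hk : 0 < k) (hl : 0 < l) (hl' : 0 < l')
    (hfg : ∀ v : V, f v ≤ min k (g v)) :
    (∀ Z : Finset (D ⊕ E × V), Z ⊆ extGround ε →
        (∑ v : V, max 0 ((k : ℤ) - min (k : ℤ) (g v) - extHeadCount hd Z v)
            ≤ (extRank k ε tl hd (extGround ε \ Z) : ℤ)) ∧
        ((k : ℤ) * Fintype.card V - l' -
              ∑ v : V, min ((extHeadCount hd Z v : ℤ)) ((k : ℤ) - f v)
            ≤ (extRank k ε tl hd (extGround ε \ Z) : ℤ))) ↔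
    (∀ P : Finset (Finset V), IsSubpartition P →
        (k : ℤ) * P.card -
            min ((l' : ℤ) - ∑ v ∈ Finset.univ \ P.biUnion id, (f v : ℤ))
              (∑ v ∈ P.biUnion id, (min k (g v) : ℤ))
          ≤ ((Finset.univ.filter fun e : E => ∃ X ∈ P, hypEnters (ε e) X).card +
              (Finset.univ.filter fun d : D => ∃ X ∈ P, dypEnters (tl d, hd d) X).card
                : ℤ)) := by
  classical
  constructor
  · -- (i) ⇒ (ii)
    intro hi P hP
    set UP := P.biUnion id with hUP
    set Z0 := (extGround ε).filter (fun z =>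
        ¬ (∃ X ∈ P, extHead hd z ∈ X ∧
          ((Sum.elim tl (fun p : E × V => (ε p.1).erase p.2) z) \ X).Nonempty) ∧
        ¬ (∃ X ∈ P, extUnder ε tl hd z ⊆ X)) with hZ0def
    have hZ0g : Z0 ⊆ extGround ε := Finset.filter_subset _ _
    have hhc := hi Z0 hZ0g
    have hup := rank_upper ε tl hd k P Z0 ?_
    swap
    · intro z hzg hznz
      by_contra hcon
      exact hznz (by
        rw [hZ0def]
        exact Finset.mem_filter.2
          ⟨hzg, fun hA => hcon (Or.inl hA), fun hB => hcon (Or.inr hB)⟩)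
    have hd0 : ∀ v ∈ UP, extHeadCount hd Z0 v = 0 := by
      intro v hv
      rw [extHeadCount, Finset.card_eq_zero, Finset.filter_eq_empty_iff]
      intro z hz
      intro hheadv
      rw [hZ0def, Finset.mem_filter] at hz
      obtain ⟨hzg, hne, hni⟩ := hz
      rw [hUP, Finset.mem_biUnion] at hv
      obtain ⟨X, hX, hvX⟩ := hv
      refine hni ⟨X, hX, ?_⟩
      have htail : (Sum.elim tl (fun p : E × V => (ε p.1).erase p.2) z) ⊆ X := by
        by_contra hnt
        rw [Finset.not_subset] at hnt
        obtain ⟨w, hw1, hw2⟩ := hnt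
        exact hne ⟨X, hX, by rw [hheadv]; exact hvX,
          ⟨w, Finset.mem_sdiff.2 ⟨hw1, hw2⟩⟩⟩
      cases z with
      | inl d =>
        show insert (hd d) (tl d) ⊆ X
        refine Finset.insert_subset ?_ htail
        have hh : extHead hd (Sum.inl d : D ⊕ E × V) = hd d := rfl
        rw [hh] at hheadv
        rw [hheadv]
        exact hvX
      | inr p =>
        show ε p.1 ⊆ X
        have h2 : ε p.1 ⊆ insert p.2 ((ε p.1).erase p.2) := by
          intro w hw
          by_cases hwp : w = p.2
          · rw [hwp]; exact Finset.mem_insert_self _ _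
          · exact Finset.mem_insert_of_mem (Finset.mem_erase.2 ⟨hwp, hw⟩)
        refine h2.trans (Finset.insert_subset ?_ htail)
        have hh : extHead hd (Sum.inr p : D ⊕ E × V) = p.2 := rfl
        rw [hh] at hheadv
        rw [hheadv]
        exact hvX
    have hUPcard : (UP.card : ℤ) = ∑ X ∈ P, (X.card : ℤ) := by
      have h1 : UP.card = ∑ X ∈ P, X.card := by
        rw [hUP, Finset.card_biUnion (s := P) (t := id)
          (fun X hX Y hY hXY => hP.2 X hX Y hY hXY)]
        rfl
      exact_mod_cast h1
    have hsum_eq : ((∑ X ∈ P, (X.card - 1) : ℕ) : ℤ) = ∑ X ∈ P, ((X.card : ℤ) - 1) := by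
      rw [Nat.cast_sum]
      refine Finset.sum_congr rfl ?_
      intro X hX
      have := Finset.card_pos.2 (hP.1 X hX)
      omega
    have hupZ : (extRank k ε tl hd (extGround ε \ Z0) : ℤ) ≤
        (k : ℤ) * (∑ X ∈ P, ((X.card : ℤ) - 1)) +
          (((Finset.univ.filter fun e : E => ∃ X ∈ P, hypEnters (ε e) X).card : ℤ) +
            ((Finset.univ.filter fun d : D => ∃ X ∈ P, dypEnters (tl d, hd d) X).card : ℤ)) := by
      calc (extRank k ε tl hd (extGround ε \ Z0) : ℤ)
          ≤ ((k * (∑ X ∈ P, (X.card - 1)) +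
              ((Finset.univ.filter fun e : E => ∃ X ∈ P, hypEnters (ε e) X).card +
                (Finset.univ.filter fun d : D => ∃ X ∈ P, dypEnters (tl d, hd d) X).card)
                : ℕ) : ℤ) := by exact_mod_cast hup
        _ = (k : ℤ) * (∑ X ∈ P, ((X.card : ℤ) - 1)) +
            (((Finset.univ.filter fun e : E => ∃ X ∈ P, hypEnters (ε e) X).card : ℤ) +
              ((Finset.univ.filter fun d : D => ∃ X ∈ P, dypEnters (tl d, hd d) X).card
                : ℤ)) := by
            rw [Nat.cast_add, Nat.cast_mul, hsum_eq, Nat.cast_add]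
    have hring : (k : ℤ) * (∑ X ∈ P, ((X.card : ℤ) - 1)) =
        (k : ℤ) * (∑ X ∈ P, (X.card : ℤ)) - (k : ℤ) * P.card := by
      rw [Finset.sum_sub_distrib, Finset.sum_const, nsmul_eq_mul, mul_one]
      ring
    have hkUP : (k : ℤ) * (UP.card : ℤ) = (k : ℤ) * ∑ X ∈ P, (X.card : ℤ) := by
      rw [hUPcard]
    rcases min_cases ((l' : ℤ) - ∑ v ∈ Finset.univ \ P.biUnion id, (f v : ℤ))
        (∑ v ∈ P.biUnion id, (min k (g v) : ℤ)) with ⟨hmeq, hmle⟩ | ⟨hmeq, hmlt⟩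
    · -- use (20)
      have h20 := hhc.2
      have hzero : ∀ v ∈ UP, min ((extHeadCount hd Z0 v : ℤ)) ((k : ℤ) - f v) = 0 := by
        intro v hv
        rw [hd0 v hv]
        have h4 : (f v : ℤ) ≤ (k : ℤ) := by
          exact_mod_cast le_trans (hfg v) (min_le_left _ _)
        push_cast
        omega
      have hsum20 : ∑ v : V, min ((extHeadCount hd Z0 v : ℤ)) ((k : ℤ) - f v) ≤
          ∑ v ∈ Finset.univ \ UP, ((k : ℤ) - f v) := by
        calc ∑ v : V, min ((extHeadCount hd Z0 v : ℤ)) ((k : ℤ) - f v)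
            = ∑ v ∈ Finset.univ \ UP, min ((extHeadCount hd Z0 v : ℤ)) ((k : ℤ) - f v) +
              ∑ v ∈ UP, min ((extHeadCount hd Z0 v : ℤ)) ((k : ℤ) - f v) :=
              (Finset.sum_sdiff (Finset.subset_univ UP)).symm
          _ = ∑ v ∈ Finset.univ \ UP, min ((extHeadCount hd Z0 v : ℤ)) ((k : ℤ) - f v) := by
              rw [Finset.sum_eq_zero hzero, add_zero]
          _ ≤ ∑ v ∈ Finset.univ \ UP, ((k : ℤ) - f v) :=
              Finset.sum_le_sum (fun v _ => min_le_right _ _)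
      have hcardout : ((Finset.univ \ UP).card : ℤ) = (Fintype.card V : ℤ) - UP.card := by
        rw [Finset.card_sdiff_of_subset (Finset.subset_univ UP),
          Nat.cast_sub (Finset.card_le_card (Finset.subset_univ UP)), Finset.card_univ]
      have hsumout : ∑ v ∈ Finset.univ \ UP, ((k : ℤ) - f v) =
          (k : ℤ) * ((Finset.univ \ UP).card : ℤ) - ∑ v ∈ Finset.univ \ UP, (f v : ℤ) := by
        rw [Finset.sum_sub_distrib, Finset.sum_const, nsmul_eq_mul, mul_comm]
      have hkout : (k : ℤ) * ((Finset.univ \ UP).card : ℤ) =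
          (k : ℤ) * (Fintype.card V : ℤ) - (k : ℤ) * (UP.card : ℤ) := by
        rw [hcardout]; ring
      rw [hmeq]
      rw [← hUP]
      linarith [h20, hupZ, hsum20, hsumout, hkout, hkUP, hring]
    · -- use (19)
      have h19 := hhc.1
      have hlow : ∑ v ∈ UP, ((k : ℤ) - min (k : ℤ) (g v)) ≤
          ∑ v : V, max 0 ((k : ℤ) - min (k : ℤ) (g v) - (extHeadCount hd Z0 v : ℤ)) := by
        calc ∑ v ∈ UP, ((k : ℤ) - min (k : ℤ) (g v))
            = ∑ v ∈ UP, max 0 ((k : ℤ) - min (k : ℤ) (g v) - (extHeadCount hd Z0 v : ℤ)) := by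
              refine Finset.sum_congr rfl ?_
              intro v hv
              rw [hd0 v hv]
              have h4 : min (k : ℤ) (g v) ≤ (k : ℤ) := min_le_left _ _
              push_cast
              omega
          _ ≤ ∑ v : V, max 0 ((k : ℤ) - min (k : ℤ) (g v) - (extHeadCount hd Z0 v : ℤ)) :=
              Finset.sum_le_sum_of_subset_of_nonneg (Finset.subset_univ _)
                (fun v _ _ => le_max_left _ _)
      have hsplitUP : ∑ v ∈ UP, ((k : ℤ) - min (k : ℤ) (g v)) =
          (k : ℤ) * (UP.card : ℤ) - ∑ v ∈ UP, min (k : ℤ) (g v) := by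
        rw [Finset.sum_sub_distrib, Finset.sum_const, nsmul_eq_mul, mul_comm]
      rw [hmeq]
      rw [← hUP]
      have hUPsum : ∑ v ∈ P.biUnion id, (min k (g v) : ℤ) = ∑ v ∈ UP, min (k : ℤ) (g v) := by
        rw [hUP]
      linarith [h19, hupZ, hlow, hsplitUP, hkUP, hring, hUPsum]
  · -- (ii) ⇒ (i)
    intro hii Z hZ
    have hφf : ∀ v, f v ≤ k := fun v => le_trans (hfg v) (min_le_left _ _)
    constructor
    · -- inequality (19)
      set hgk : V → ℕ := fun v => min k (g v) with hhgk
      have hφ : ∀ v, hgk v ≤ k := fun v => min_le_left _ _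
      have hcastgk : ∀ v, ((hgk v : ℕ) : ℤ) = min (k : ℤ) (g v) := by
        intro v
        rw [hhgk]
        push_cast
        rfl
      have hM : ∀ Q : Finset (Finset V), ∀ R : Finset V,
          Disjoint R (Q.biUnion id) →
          min ((l' : ℤ) - ∑ v ∈ Finset.univ \ Q.biUnion id, (f v : ℤ))
              (∑ v ∈ Q.biUnion id, (min k (g v) : ℤ)) + ∑ v ∈ R, (hgk v : ℤ)
            ≤ ∑ v : V, (hgk v : ℤ) := by
        intro Q R hdis
        have h1 : min ((l' : ℤ) - ∑ v ∈ Finset.univ \ Q.biUnion id, (f v : ℤ))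
            (∑ v ∈ Q.biUnion id, (min k (g v) : ℤ)) ≤
            ∑ v ∈ Q.biUnion id, (min k (g v) : ℤ) := min_le_right _ _
        have h2 : ∑ v ∈ Q.biUnion id, (min (k : ℤ) (g v)) =
            ∑ v ∈ Q.biUnion id, (hgk v : ℤ) :=
          Finset.sum_congr rfl (fun v _ => (hcastgk v).symm)
        have h3 : ∑ v ∈ Q.biUnion id, (hgk v : ℤ) + ∑ v ∈ R, (hgk v : ℤ) =
            ∑ v ∈ (Q.biUnion id) ∪ R, (hgk v : ℤ) :=
          (Finset.sum_union hdis.symm).symm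
        have h4 : ∑ v ∈ (Q.biUnion id) ∪ R, (hgk v : ℤ) ≤ ∑ v : V, (hgk v : ℤ) :=
          Finset.sum_le_sum_of_subset_of_nonneg (Finset.subset_univ _)
            (fun v _ _ => by positivity)
        linarith [h1, h2, h3, h4]
      have key := rank_lower ε tl hd hε hD f g k l' hk hii Z hgk hφ
        (∑ v : V, (hgk v : ℤ)) hM
      have hidv : ∀ v : V,
          max 0 ((k : ℤ) - min (k : ℤ) (g v) - (extHeadCount hd Z v : ℤ))
          = ((k : ℤ) - (hgk v : ℤ)) -
            min ((extHeadCount hd Z v : ℤ)) ((k : ℤ) - (hgk v : ℤ)) := by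
        intro v
        rw [hcastgk v]
        omega
      have hsplit : ∑ v : V, max 0 ((k : ℤ) - min (k : ℤ) (g v) -
            (extHeadCount hd Z v : ℤ)) =
          (k : ℤ) * Fintype.card V - (∑ v : V, (hgk v : ℤ)) -
            ∑ v : V, min ((extHeadCount hd Z v : ℤ)) ((k : ℤ) - (hgk v : ℤ)) := by
        rw [Finset.sum_congr rfl (fun v _ => hidv v), Finset.sum_sub_distrib,
          Finset.sum_sub_distrib, Finset.sum_const, Finset.card_univ, nsmul_eq_mul,
          mul_comm]
      rw [hsplit]
      exact key
    · -- inequality (20)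
      have hM : ∀ Q : Finset (Finset V), ∀ R : Finset V,
          Disjoint R (Q.biUnion id) →
          min ((l' : ℤ) - ∑ v ∈ Finset.univ \ Q.biUnion id, (f v : ℤ))
              (∑ v ∈ Q.biUnion id, (min k (g v) : ℤ)) + ∑ v ∈ R, (f v : ℤ)
            ≤ (l' : ℤ) := by
        intro Q R hdis
        have h1 : min ((l' : ℤ) - ∑ v ∈ Finset.univ \ Q.biUnion id, (f v : ℤ))
            (∑ v ∈ Q.biUnion id, (min k (g v) : ℤ)) ≤
            (l' : ℤ) - ∑ v ∈ Finset.univ \ Q.biUnion id, (f v : ℤ) := min_le_left _ _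
        have hRsub : R ⊆ Finset.univ \ Q.biUnion id := by
          intro v hv
          rw [Finset.mem_sdiff]
          exact ⟨Finset.mem_univ v, fun hc => Finset.disjoint_left.1 hdis hv hc⟩
        have h2 : ∑ v ∈ R, (f v : ℤ) ≤ ∑ v ∈ Finset.univ \ Q.biUnion id, (f v : ℤ) :=
          Finset.sum_le_sum_of_subset_of_nonneg hRsub (fun v _ _ => by positivity)
        linarith
      exact rank_lower ε tl hd hε hD f g k l' hk hii Z f hφf (l' : ℤ) hM

end ArborPaper
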